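/- arXiv:1912.07664 — 3 statements merged into one kernel-verified Lean document; each statement's English description precedes it below -/
import Mathlib

section
/- Let N ≥ 5 and W, ΛW as above. Then ∫_{ℝ^N} |x|^{2−N} W^{4/(N−2)}(x) ΛW(x) dx = ((N−2)²/(2(N+2))) ∫_{ℝ^N} |x|^{2−N} W^{(N+2)/(N−2)}(x) dx. -/
open MeasureTheory Real

/-- The Aubin–Talenti ground state `W`. -/
noncomputable def W (N : ℕ) (x : EuclideanSpace ℝ (Fin N)) : ℝ :=
  (1 + ‖x‖ ^ 2 / ((N : ℝ) * ((N : ℝ) - 2))) ^ (((2 : ℝ) - (N : ℝ)) / 2)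

/-- `ΛW = x · ∇W + ((N-2)/2) W`, the generator of the scaling symmetry. -/
noncomputable def LamW (N : ℕ) (x : EuclideanSpace ℝ (Fin N)) : ℝ :=
  (inner ℝ x (gradient (W N) x) : ℝ) + (((N : ℝ) - 2) / 2) * W N x

open Set Filter Topology

section Aux

lemma aux_deriv_base {m : ℝ} (r : ℝ) :
    HasDerivAt (fun r : ℝ => 1 + r ^ 2 / m) (2 * r / m) r := by
  have h := ((hasDerivAt_pow 2 r).div_const m).const_add 1
  simpa using h

lemma aux_base_pos' {m : ℝ} (hm : 0 < m) (t : ℝ) (ht : 0 ≤ t) : 0 < 1 + t / m := by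
  positivity

lemma aux_base_pos {m : ℝ} (hm : 0 < m) (r : ℝ) : 0 < 1 + r ^ 2 / m := by positivity

lemma aux_deriv_rpow_base {m q : ℝ} (hm : 0 < m) (r : ℝ) :
    HasDerivAt (fun r : ℝ => (1 + r ^ 2 / m) ^ q)
      (q * (1 + r ^ 2 / m) ^ (q - 1) * (2 * r / m)) r := by
  have h := (Real.hasDerivAt_rpow_const (x := 1 + r ^ 2 / m) (p := q)
    (Or.inl (aux_base_pos hm r).ne')).comp r (aux_deriv_base (m := m) r)
  exact h

lemma aux_tendsto_base_rpow {m q : ℝ} (hm : 0 < m) (hq : q < 0) :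
    Tendsto (fun r : ℝ => (1 + r ^ 2 / m) ^ q) atTop (𝓝 0) := by
  have h1 : Tendsto (fun r : ℝ => 1 + r ^ 2 / m) atTop atTop := by
    apply tendsto_atTop_add_const_left
    exact (tendsto_pow_atTop two_ne_zero).atTop_div_const hm
  have h2 := tendsto_rpow_neg_atTop (y := -q) (by linarith)
  have := h2.comp h1
  simpa [Function.comp_def] using this

lemma aux_radial_int {m a : ℝ} (hm : 0 < m) (ha : 1 < a) :
    IntegrableOn (fun r : ℝ => r * (1 + r ^ 2 / m) ^ (-a)) (Ioi 0) ∧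
    ∫ r in Ioi (0:ℝ), r * (1 + r ^ 2 / m) ^ (-a) = m / (2 * (a - 1)) := by
  set g : ℝ → ℝ := fun r => -(m / (2 * (a - 1))) * (1 + r ^ 2 / m) ^ (1 - a) with hg
  have hderiv : ∀ r ∈ Ici (0:ℝ), HasDerivAt g (r * (1 + r ^ 2 / m) ^ (-a)) r := by
    intro r _
    have h := (aux_deriv_rpow_base hm (q := 1 - a) r).const_mul (-(m / (2 * (a - 1))))
    have he : (1:ℝ) - a - 1 = -a := by ring
    rw [he] at h
    have key : ∀ X : ℝ, -(m / (2 * (a - 1))) * ((1 - a) * X * (2 * r / m)) = r * X := by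
      intro X
      have h1 : m ≠ 0 := hm.ne'
      have h2 : a - 1 ≠ 0 := sub_ne_zero.mpr (ne_of_gt ha)
      field_simp
      ring
    rw [key] at h
    exact h
  have hpos : ∀ r ∈ Ioi (0:ℝ), 0 ≤ r * (1 + r ^ 2 / m) ^ (-a) := by
    intro r hr
    have h1 := (aux_base_pos hm r).le
    have hr' := le_of_lt (mem_Ioi.mp hr)
    positivity
  have htend : Tendsto g atTop (𝓝 0) := by
    have := (aux_tendsto_base_rpow hm (q := 1 - a) (by linarith)).const_mul (-(m / (2 * (a - 1))))
    simpa [hg] using this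
  refine ⟨integrableOn_Ioi_deriv_of_nonneg' hderiv hpos htend, ?_⟩
  rw [integral_Ioi_of_hasDerivAt_of_nonneg' hderiv hpos htend]
  simp [hg, Real.one_rpow]

lemma aux_radial_int3 {m b : ℝ} (hm : 0 < m) (hb : 2 < b) :
    IntegrableOn (fun r : ℝ => r ^ 3 * (1 + r ^ 2 / m) ^ (-b)) (Ioi 0) ∧
    ∫ r in Ioi (0:ℝ), r ^ 3 * (1 + r ^ 2 / m) ^ (-b)
      = m ^ 2 / (2 * (b - 1) * (b - 2)) := by
  have hm' : m ≠ 0 := hm.ne'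
  have hb1 : b - 1 ≠ 0 := by intro h; nlinarith
  have hb2 : b - 2 ≠ 0 := sub_ne_zero.mpr (ne_of_gt hb)
  have hb2' : (2:ℝ) - b ≠ 0 := fun h => hb2 (by linarith)
  set c1 : ℝ := m ^ 2 / (2 * (b - 1)) with hc1
  set c2 : ℝ := m ^ 2 / (2 * (2 - b)) with hc2
  set g : ℝ → ℝ := fun r => c1 * (1 + r ^ 2 / m) ^ (1 - b) + c2 * (1 + r ^ 2 / m) ^ (2 - b)
    with hg
  have hderiv : ∀ r ∈ Ici (0:ℝ), HasDerivAt g (r ^ 3 * (1 + r ^ 2 / m) ^ (-b)) r := by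
    intro r _
    have h1 := (aux_deriv_rpow_base hm (q := 1 - b) r).const_mul c1
    have h2 := (aux_deriv_rpow_base hm (q := 2 - b) r).const_mul c2
    have he1 : (1:ℝ) - b - 1 = -b := by ring
    have he2 : (2:ℝ) - b - 1 = 1 - b := by ring
    rw [he1] at h1; rw [he2] at h2
    have hsplit : (1 + r ^ 2 / m) ^ ((1:ℝ) - b)
        = (1 + r ^ 2 / m) * (1 + r ^ 2 / m) ^ (-b) := by
      rw [show (1:ℝ) - b = 1 + (-b) by ring, Real.rpow_add (aux_base_pos hm r), Real.rpow_one]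
    rw [hsplit] at h2
    have h := h1.add h2
    have key : ∀ X : ℝ, r ^ 3 * X
        = c1 * ((1 - b) * X * (2 * r / m))
          + c2 * ((2 - b) * ((1 + r ^ 2 / m) * X) * (2 * r / m)) := by
      intro X
      rw [hc1, hc2]
      field_simp
      ring
    rw [← key] at h
    exact h
  have hpos : ∀ r ∈ Ioi (0:ℝ), 0 ≤ r ^ 3 * (1 + r ^ 2 / m) ^ (-b) := by
    intro r hr
    have h1 := (aux_base_pos hm r).le
    have hr' := le_of_lt (mem_Ioi.mp hr)
    positivity
  have htend : Tendsto g atTop (𝓝 0) := by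
    have t1 := (aux_tendsto_base_rpow hm (q := 1 - b) (by linarith)).const_mul c1
    have t2 := (aux_tendsto_base_rpow hm (q := 2 - b) (by linarith)).const_mul c2
    have := t1.add t2
    simpa [hg] using this
  refine ⟨integrableOn_Ioi_deriv_of_nonneg' hderiv hpos htend, ?_⟩
  rw [integral_Ioi_of_hasDerivAt_of_nonneg' hderiv hpos htend]
  simp only [hg, hc1, hc2]
  norm_num
  field_simp
  ring

lemma aux_inner_grad (N : ℕ) (hN : 5 ≤ N) (x : EuclideanSpace ℝ (Fin N)) :
    (inner ℝ x (gradient (W N) x) : ℝ)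
      = -(1 / (N : ℝ)) * ‖x‖ ^ 2
          * (1 + ‖x‖ ^ 2 / ((N : ℝ) * ((N : ℝ) - 2))) ^ (-(N : ℝ) / 2) := by
  have hn : (5 : ℝ) ≤ (N : ℝ) := by exact_mod_cast hN
  set m : ℝ := (N : ℝ) * ((N : ℝ) - 2) with hmdef
  have hm : 0 < m := by nlinarith
  set p : ℝ := ((2 : ℝ) - (N : ℝ)) / 2 with hpdef
  have hbpos : 0 < 1 + ‖x‖ ^ 2 / m := aux_base_pos' hm _ (by positivity)
  set c : ℝ := p * (1 + ‖x‖ ^ 2 / m) ^ (p - 1) * (1 / m) with hcdef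
  have h1 : HasDerivAt (fun s : ℝ => s ^ p) (p * (1 + ‖x‖ ^ 2 / m) ^ (p - 1))
      (1 + ‖x‖ ^ 2 / m) := Real.hasDerivAt_rpow_const (Or.inl hbpos.ne')
  have h2 : HasDerivAt (fun t : ℝ => 1 + t / m) (1 / m) (‖x‖ ^ 2) := by
    simpa using ((hasDerivAt_id (‖x‖ ^ 2)).div_const m).const_add 1
  have hφ : HasDerivAt (fun t : ℝ => (1 + t / m) ^ p) c (‖x‖ ^ 2) := by
    have := h1.comp (‖x‖ ^ 2) h2
    simpa [Function.comp_def, hcdef, mul_assoc] using this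
  have hnsq : HasFDerivAt (fun y : EuclideanSpace ℝ (Fin N) => ‖y‖ ^ 2)
      (2 • (innerSL ℝ x)) x := (hasStrictFDerivAt_norm_sq x).hasFDerivAt
  have hF : HasFDerivAt (W N) (c • (2 • (innerSL ℝ x))) x := by
    have := hφ.comp_hasFDerivAt x hnsq
    exact this
  have hL : c • (2 • (innerSL ℝ x)) =
      (InnerProductSpace.toDual ℝ (EuclideanSpace ℝ (Fin N))) ((2 * c) • x) := by
    ext y
    simp [InnerProductSpace.toDual_apply_apply, real_inner_smul_left]
    ring
  rw [hL] at hF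
  have hgrad : gradient (W N) x = (2 * c) • x := by
    have := hF.hasGradientAt.gradient
    simpa using this
  rw [hgrad, real_inner_smul_right, real_inner_self_eq_norm_sq]
  have hexp : p - 1 = -(N : ℝ) / 2 := by rw [hpdef]; ring
  rw [hcdef, hexp, hpdef]
  have h1' : (N : ℝ) ≠ 0 := by linarith
  have h2' : (N : ℝ) - 2 ≠ 0 := by linarith
  rw [hmdef]
  field_simp
  ring

end Aux

theorem integral_weighted_W_pow_LamW (N : ℕ) (hN : 5 ≤ N) :
    ∫ x : EuclideanSpace ℝ (Fin N),
        ‖x‖ ^ ((2 : ℝ) - (N : ℝ)) * W N x ^ ((4 : ℝ) / ((N : ℝ) - 2)) * LamW N x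
      = (((N : ℝ) - 2) ^ 2 / (2 * ((N : ℝ) + 2))) *
          ∫ x : EuclideanSpace ℝ (Fin N),
            ‖x‖ ^ ((2 : ℝ) - (N : ℝ)) * W N x ^ (((N : ℝ) + 2) / ((N : ℝ) - 2)) := by
  have hn : (5 : ℝ) ≤ (N : ℝ) := by exact_mod_cast hN
  set n : ℝ := (N : ℝ) with hndef
  have hn0 : n ≠ 0 := by linarith
  have hn2 : n - 2 ≠ 0 := by linarith
  have hnp2 : n + 2 ≠ 0 := by linarith
  set m : ℝ := n * (n - 2) with hmdef
  have hm : 0 < m := by nlinarith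
  set gL : ℝ → ℝ := fun r => r ^ ((2 : ℝ) - n) *
      (-(1 / n) * r ^ 2 * (1 + r ^ 2 / m) ^ (-((n + 4) / 2))
        + (n - 2) / 2 * (1 + r ^ 2 / m) ^ (-((n + 2) / 2))) with hgL
  set gR : ℝ → ℝ := fun r => r ^ ((2 : ℝ) - n) * (1 + r ^ 2 / m) ^ (-((n + 2) / 2)) with hgR
  have keyL : ∀ x : EuclideanSpace ℝ (Fin N),
      ‖x‖ ^ ((2 : ℝ) - n) * W N x ^ ((4 : ℝ) / (n - 2)) * LamW N x = gL ‖x‖ := by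
    intro x
    have hb : 0 < 1 + ‖x‖ ^ 2 / m := aux_base_pos' hm _ (by positivity)
    have hW : W N x = (1 + ‖x‖ ^ 2 / m) ^ (((2 : ℝ) - n) / 2) := rfl
    simp only [LamW, hgL]
    rw [aux_inner_grad N hN x, hW, ← Real.rpow_mul hb.le]
    have he : ((2 : ℝ) - n) / 2 * ((4 : ℝ) / (n - 2)) = -2 := by field_simp; ring
    rw [he]
    have e1 : (1 + ‖x‖ ^ 2 / m) ^ (-((n + 4) / 2))
        = (1 + ‖x‖ ^ 2 / m) ^ ((-2 : ℝ)) * (1 + ‖x‖ ^ 2 / m) ^ (-n / 2) := by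
      rw [← Real.rpow_add hb]; congr 1; ring
    have e2 : (1 + ‖x‖ ^ 2 / m) ^ (-((n + 2) / 2))
        = (1 + ‖x‖ ^ 2 / m) ^ ((-2 : ℝ)) * (1 + ‖x‖ ^ 2 / m) ^ (((2 : ℝ) - n) / 2) := by
      rw [← Real.rpow_add hb]; congr 1; ring
    rw [e1, e2, hmdef]
    ring
  have keyR : ∀ x : EuclideanSpace ℝ (Fin N),
      ‖x‖ ^ ((2 : ℝ) - n) * W N x ^ ((n + 2) / (n - 2)) = gR ‖x‖ := by
    intro x
    have hb : 0 < 1 + ‖x‖ ^ 2 / m := aux_base_pos' hm _ (by positivity)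
    have hW : W N x = (1 + ‖x‖ ^ 2 / m) ^ (((2 : ℝ) - n) / 2) := rfl
    simp only [hgR]
    rw [hW, ← Real.rpow_mul hb.le]
    have he : ((2 : ℝ) - n) / 2 * ((n + 2) / (n - 2)) = -((n + 2) / 2) := by
      field_simp; ring
    rw [he]
  have i3 := aux_radial_int3 hm (b := (n + 4) / 2) (by linarith)
  have i1 := aux_radial_int hm (a := (n + 2) / 2) (by linarith)
  have hIoiL : ∫ y in Ioi (0:ℝ), y ^ (N - 1) • gL y
      = -(1 / n) * (m ^ 2 / (2 * ((n + 4) / 2 - 1) * ((n + 4) / 2 - 2)))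
        + (n - 2) / 2 * (m / (2 * ((n + 2) / 2 - 1))) := by
    have hcongr : EqOn (fun y : ℝ => y ^ (N - 1) • gL y)
        (fun y : ℝ => -(1 / n) * (y ^ 3 * (1 + y ^ 2 / m) ^ (-((n + 4) / 2)))
          + (n - 2) / 2 * (y * (1 + y ^ 2 / m) ^ (-((n + 2) / 2)))) (Ioi 0) := by
      intro y hy
      have hy0 : (0:ℝ) < y := hy
      have hr : (y : ℝ) ^ (N - 1 : ℕ) * y ^ ((2 : ℝ) - n) = y := by
        rw [← Real.rpow_natCast y (N - 1), ← Real.rpow_add hy0]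
        have hc : ((N - 1 : ℕ) : ℝ) = n - 1 := by
          rw [Nat.cast_sub (by omega), hndef]; norm_num
        rw [hc, show n - 1 + ((2:ℝ) - n) = 1 by ring, Real.rpow_one]
      simp only [smul_eq_mul, hgL]
      calc y ^ (N - 1 : ℕ) * (y ^ ((2 : ℝ) - n) *
            (-(1 / n) * y ^ 2 * (1 + y ^ 2 / m) ^ (-((n + 4) / 2))
              + (n - 2) / 2 * (1 + y ^ 2 / m) ^ (-((n + 2) / 2))))
          = (y ^ (N - 1 : ℕ) * y ^ ((2 : ℝ) - n)) *
            (-(1 / n) * y ^ 2 * (1 + y ^ 2 / m) ^ (-((n + 4) / 2))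
              + (n - 2) / 2 * (1 + y ^ 2 / m) ^ (-((n + 2) / 2))) := by ring
        _ = y * (-(1 / n) * y ^ 2 * (1 + y ^ 2 / m) ^ (-((n + 4) / 2))
              + (n - 2) / 2 * (1 + y ^ 2 / m) ^ (-((n + 2) / 2))) := by rw [hr]
        _ = -(1 / n) * (y ^ 3 * (1 + y ^ 2 / m) ^ (-((n + 4) / 2)))
              + (n - 2) / 2 * (y * (1 + y ^ 2 / m) ^ (-((n + 2) / 2))) := by ring
    rw [setIntegral_congr_fun measurableSet_Ioi hcongr,
      integral_add ((i3.1).const_mul _) ((i1.1).const_mul _),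
      integral_const_mul, integral_const_mul, i3.2, i1.2]
  have hIoiR : ∫ y in Ioi (0:ℝ), y ^ (N - 1) • gR y = m / (2 * ((n + 2) / 2 - 1)) := by
    have hcongr : EqOn (fun y : ℝ => y ^ (N - 1) • gR y)
        (fun y : ℝ => y * (1 + y ^ 2 / m) ^ (-((n + 2) / 2))) (Ioi 0) := by
      intro y hy
      have hy0 : (0:ℝ) < y := hy
      have hr : (y : ℝ) ^ (N - 1 : ℕ) * y ^ ((2 : ℝ) - n) = y := by
        rw [← Real.rpow_natCast y (N - 1), ← Real.rpow_add hy0]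
        have hc : ((N - 1 : ℕ) : ℝ) = n - 1 := by
          rw [Nat.cast_sub (by omega), hndef]; norm_num
        rw [hc, show n - 1 + ((2:ℝ) - n) = 1 by ring, Real.rpow_one]
      simp only [smul_eq_mul, hgR]
      calc y ^ (N - 1 : ℕ) * (y ^ ((2 : ℝ) - n) * (1 + y ^ 2 / m) ^ (-((n + 2) / 2)))
          = (y ^ (N - 1 : ℕ) * y ^ ((2 : ℝ) - n)) * (1 + y ^ 2 / m) ^ (-((n + 2) / 2)) := by
            ring
        _ = y * (1 + y ^ 2 / m) ^ (-((n + 2) / 2)) := by rw [hr]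
    rw [setIntegral_congr_fun measurableSet_Ioi hcongr, i1.2]
  haveI : Nontrivial (EuclideanSpace ℝ (Fin N)) := by
    apply Module.nontrivial_of_finrank_pos (R := ℝ)
    rw [finrank_euclideanSpace_fin]; omega
  rw [show (fun x : EuclideanSpace ℝ (Fin N) =>
        ‖x‖ ^ ((2 : ℝ) - n) * W N x ^ ((4 : ℝ) / (n - 2)) * LamW N x)
      = fun x => gL ‖x‖ from funext keyL,
    show (fun x : EuclideanSpace ℝ (Fin N) =>
        ‖x‖ ^ ((2 : ℝ) - n) * W N x ^ ((n + 2) / (n - 2)))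
      = fun x => gR ‖x‖ from funext keyR,
    integral_fun_norm_addHaar volume gL, integral_fun_norm_addHaar volume gR]
  simp only [finrank_euclideanSpace_fin]
  have harith : -(1 / n) * (m ^ 2 / (2 * ((n + 4) / 2 - 1) * ((n + 4) / 2 - 2)))
        + (n - 2) / 2 * (m / (2 * ((n + 2) / 2 - 1)))
      = ((n - 2) ^ 2 / (2 * (n + 2))) * (m / (2 * ((n + 2) / 2 - 1))) := by
    rw [show (n + 4) / 2 - 1 = (n + 2) / 2 by ring, show (n + 4) / 2 - 2 = n / 2 by ring,
      show (n + 2) / 2 - 1 = n / 2 by ring, hmdef]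
    field_simp
    ring
  rw [hIoiL, hIoiR, harith, nsmul_eq_mul, nsmul_eq_mul, smul_eq_mul, smul_eq_mul]
  ring
end

section
/- Let N ≥ 5, J ≥ 1. There is a constant C (depending on N, J) such that for all reals y₁,…,y_J, h: |(N−2)/(2N)·|Σⱼyⱼ + h|^{2N/(N−2)} − (N−2)/(2N)·Σⱼ|yⱼ|^{2N/(N−2)} − Σⱼ|yⱼ|^{4/(N−2)}yⱼh − Σ_{j≠k}|yⱼ|^{4/(N−2)}yⱼy_k| ≤ C(|h|^{2N/(N−2)} + Σⱼ|yⱼ|^{4/(N−2)}h² + Σ_{j<k}(min(|yⱼ|^{4/(N−2)}y_k², |y_k|^{4/(N−2)}yⱼ²) + min(|yⱼ|^{(N+2)/(N−2)}|y_k|, |y_k|^{(N+2)/(N−2)}|yⱼ|))). -/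
set_option maxHeartbeats 1000000000

open Real Finset


lemma helper_minB {p x M : ℝ} (hx : 0 ≤ x) (hxM : x ≤ M) (hp : 2 ≤ p) :
    x ^ (p-1) * M ≤ M ^ (p-1) * x := by
  rcases eq_or_lt_of_le hx with h0 | h0
  · simp [← h0, Real.zero_rpow (by linarith : p - 1 ≠ 0)]
  · have hM : 0 < M := lt_of_lt_of_le h0 hxM
    have e1 : x ^ (p-1) = x ^ (p-2) * x := by
      rw [← Real.rpow_add_one (ne_of_gt h0)]; ring_nf
    have e2 : M ^ (p-1) = M ^ (p-2) * M := by
      rw [← Real.rpow_add_one (ne_of_gt hM)]; ring_nf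
    rw [e1, e2]
    have h3 : x ^ (p-2) ≤ M ^ (p-2) := Real.rpow_le_rpow hx hxM (by linarith)
    nlinarith [mul_le_mul_of_nonneg_right h3 (by positivity : (0:ℝ) ≤ x * M)]

lemma helper_minA {p x M : ℝ} (hx : 0 ≤ x) (hxM : x ≤ M) (hp : 2 ≤ p) (hp4 : p ≤ 4) :
    M ^ (p-2) * x ^ 2 ≤ x ^ (p-2) * M ^ 2 := by
  rcases eq_or_lt_of_le hx with h0 | h0
  · have hpos : (0:ℝ) ≤ x ^ (p-2) * M ^ 2 := by positivity
    simpa [← h0] using hpos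
  · have hM : 0 < M := lt_of_lt_of_le h0 hxM
    have e1 : x ^ 2 = x ^ (p-2) * x ^ (4-p) := by
      rw [← Real.rpow_add h0]; norm_num
    have e2 : (M:ℝ) ^ 2 = M ^ (p-2) * M ^ (4-p) := by
      rw [← Real.rpow_add hM]; norm_num
    rw [e1, e2]
    have h3 : x ^ (4-p) ≤ M ^ (4-p) := Real.rpow_le_rpow hx hxM (by linarith)
    have h4 : (0:ℝ) ≤ M ^ (p-2) := Real.rpow_nonneg hM.le _
    have h5 : (0:ℝ) ≤ x ^ (p-2) := Real.rpow_nonneg hx _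
    nlinarith [mul_le_mul_of_nonneg_left h3 (mul_nonneg h5 h4)]

lemma helper_pow_le {p x M : ℝ} (hx : 0 ≤ x) (hxM : x ≤ M) (hp : 1 ≤ p) :
    x ^ p ≤ x ^ (p-1) * M := by
  rcases eq_or_lt_of_le hx with h0 | h0
  · have hM : (0:ℝ) ≤ M := le_trans hx hxM
    have : (0:ℝ) ≤ (0:ℝ) ^ (p-1) * M := mul_nonneg (Real.rpow_nonneg le_rfl _) hM
    simpa [← h0, Real.zero_rpow (by linarith : p ≠ 0)] using this
  · have e1 : x ^ p = x ^ (p-1) * x := by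
      rw [← Real.rpow_add_one (ne_of_gt h0)]; ring_nf
    rw [e1]
    exact mul_le_mul_of_nonneg_left hxM (Real.rpow_nonneg hx _)

lemma helper_amgm {p x t : ℝ} (hx : 0 ≤ x) (ht : 0 ≤ t) (hp : 2 ≤ p) :
    x ^ (p-1) * t ≤ (x ^ p + x ^ (p-2) * t ^ 2) / 2 := by
  rcases eq_or_lt_of_le hx with h0 | h0
  · have hpos : (0:ℝ) ≤ (x ^ p + x ^ (p-2) * t ^ 2) / 2 := by positivity
    have hz : x ^ (p-1) * t = 0 := by
      rw [← h0, Real.zero_rpow (by linarith : p - 1 ≠ 0), zero_mul]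
    linarith
  · have e1 : x ^ (p-1) = x ^ (p-2) * x := by
      rw [← Real.rpow_add_one (ne_of_gt h0)]; ring_nf
    have e2 : x ^ p = x ^ (p-2) * x ^ 2 := by
      rw [← Real.rpow_natCast x 2, ← Real.rpow_add h0]; norm_num
    rw [e1, e2]
    have h4 : (0:ℝ) ≤ x ^ (p-2) := Real.rpow_nonneg hx _
    nlinarith [mul_nonneg h4 (sq_nonneg (x - t))]

lemma helper_pm1 {p x M : ℝ} (hx : 0 ≤ x) (hxM : x ≤ M) (hp : 2 ≤ p) :
    x ^ (p-1) ≤ M ^ (p-2) * x := by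
  rcases eq_or_lt_of_le hx with h0 | h0
  · simp [← h0, Real.zero_rpow (by linarith : p - 1 ≠ 0)]
  · have e1 : x ^ (p-1) = x ^ (p-2) * x := by
      rw [← Real.rpow_add_one (ne_of_gt h0)]; ring_nf
    rw [e1]
    exact mul_le_mul_of_nonneg_right (Real.rpow_le_rpow hx hxM (by linarith)) h0.le

lemma helper_addpow {p x y : ℝ} (hx : 0 ≤ x) (hy : 0 ≤ y) (hp : 0 ≤ p) :
    (x + y) ^ p ≤ 2 ^ p * (x ^ p + y ^ p) := by
  have h1 : x + y ≤ 2 * max x y := by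
    rcases max_cases x y with ⟨h, h'⟩ | ⟨h, h'⟩ <;> rw [h] <;> linarith
  calc (x+y)^p ≤ (2 * max x y) ^ p :=
        Real.rpow_le_rpow (by linarith) h1 hp
    _ = 2 ^ p * (max x y) ^ p := Real.mul_rpow (by norm_num) (le_max_iff.2 (Or.inl hx))
    _ ≤ 2 ^ p * (x ^ p + y ^ p) := by
        apply mul_le_mul_of_nonneg_left _ (Real.rpow_nonneg (by norm_num) p)
        rcases max_cases x y with ⟨h, h'⟩ | ⟨h, h'⟩ <;> rw [h] <;>
          [nlinarith [Real.rpow_nonneg hy p]; nlinarith [Real.rpow_nonneg hx p]]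


lemma taylor_pos {p : ℝ} (hp : 2 < p) {a b : ℝ} (ha : 0 < a) (hb : 2 * |b| < a) :
    |(|a + b|) ^ p / p - |a| ^ p / p - |a| ^ (p - 2) * a * b| ≤
      (p - 1) * (3 / 2) ^ (p - 2) * |a| ^ (p - 2) * b ^ 2 := by
  have hp0 : p ≠ 0 := by linarith
  set g : ℝ → ℝ := fun t => |a + t * b| ^ p / p - |a| ^ p / p - |a| ^ (p-2) * a * (t * b) with hg
  set g' : ℝ → ℝ := fun t => ((a + t * b) ^ (p-1) - a ^ (p-1)) * b with hg'
  have habs : |a| = a := abs_of_pos ha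
  -- positivity of a + t*b on [0,1]
  have hpos : ∀ t ∈ Set.Icc (0:ℝ) 1, a / 2 ≤ a + t * b ∧ a + t * b ≤ 3 * a / 2 := by
    intro t ht
    have h1 : |t * b| ≤ |b| := by
      rw [abs_mul, abs_of_nonneg ht.1]
      nlinarith [abs_nonneg b, ht.2]
    have := abs_le.1 h1
    have := abs_le.1 (le_refl |b|)
    constructor <;> nlinarith [abs_nonneg b]
  -- derivative of g
  have hderiv : ∀ t ∈ Set.Icc (0:ℝ) 1, HasDerivAt g (g' t) t := by
    intro t ht
    have hpt : 0 < a + t * b := lt_of_lt_of_le (by linarith) (hpos t ht).1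
    have h1 : HasDerivAt (fun s : ℝ => a + s * b) b t := by
      simpa using ((hasDerivAt_id t).mul_const b).const_add a
    have h2 : HasDerivAt (fun x : ℝ => x ^ p) (p * (a + t * b) ^ (p-1)) (a + t * b) :=
      Real.hasDerivAt_rpow_const (Or.inl (ne_of_gt hpt))
    have h3 : HasDerivAt (fun s : ℝ => (a + s * b) ^ p) (p * (a + t * b) ^ (p-1) * b) t :=
      by have := h2.comp t h1; exact this
    have h4 : HasDerivAt (fun s : ℝ => |a + s * b| ^ p) (p * (a + t * b) ^ (p-1) * b) t := by
      apply h3.congr_of_eventuallyEq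
      have hopen : IsOpen {s : ℝ | 0 < a + s * b} :=
        isOpen_lt continuous_const (continuous_const.add (continuous_id.mul continuous_const))
      filter_upwards [hopen.mem_nhds (by simpa using hpt)] with s hs
      rw [abs_of_pos hs]
    have h5 : HasDerivAt g (p * (a + t * b) ^ (p-1) * b / p - |a| ^ (p-2) * a * b) t := by
      apply HasDerivAt.sub
      · apply HasDerivAt.sub_const
        exact h4.div_const p
      · simpa using (((hasDerivAt_id t).mul_const b).const_mul (|a| ^ (p-2) * a))
    convert h5 using 1
    rw [habs, ← Real.rpow_add_one (ne_of_gt ha)]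
    field_simp
    ring_nf
    simp only [hg']
    ring_nf
  -- bound on g'
  have hLip : ∀ x ∈ Set.Icc (a/2) (3*a/2), ∀ y ∈ Set.Icc (a/2) (3*a/2),
      |x ^ (p-1) - y ^ (p-1)| ≤ (p-1) * (3*a/2) ^ (p-2) * |x - y| := by
    intro x hx y hy
    have key := Convex.norm_image_sub_le_of_norm_hasDerivWithin_le
      (f := fun u : ℝ => u ^ (p-1)) (f' := fun u => (p-1) * u ^ (p-2))
      (s := Set.Icc (a/2) (3*a/2)) (C := (p-1) * (3*a/2) ^ (p-2))
      (fun u hu => by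
        have hu0 : u ≠ 0 := by
          have := hu.1; intro h; rw [h] at this; linarith
        rw [show p - 2 = p - 1 - 1 by ring]
        exact (Real.hasDerivAt_rpow_const (Or.inl hu0)).hasDerivWithinAt)
      (fun u hu => by
        have hu0 : (0:ℝ) ≤ u := by have := hu.1; linarith
        rw [Real.norm_eq_abs, abs_of_nonneg (mul_nonneg (by linarith) (Real.rpow_nonneg hu0 _))]
        have := Real.rpow_le_rpow hu0 hu.2 (by linarith : (0:ℝ) ≤ p - 2)
        nlinarith
        ) (convex_Icc _ _) hy hx
    simpa [Real.norm_eq_abs] using key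
  have hbound : ∀ t ∈ Set.Icc (0:ℝ) 1, ‖g' t‖ ≤ (p-1) * (3*a/2) ^ (p-2) * b ^ 2 := by
    intro t ht
    have h1 := hpos t ht
    have hmem1 : a + t * b ∈ Set.Icc (a/2) (3*a/2) := ⟨h1.1, by linarith [h1.2]⟩
    have hmem2 : a ∈ Set.Icc (a/2) (3*a/2) := ⟨by linarith, by linarith⟩
    have h2 := hLip _ hmem1 _ hmem2
    have h3 : |a + t * b - a| = t * |b| := by
      rw [show a + t * b - a = t * b by ring, abs_mul, abs_of_nonneg ht.1]
    rw [h3] at h2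
    have h4 : t * |b| ≤ |b| := by nlinarith [abs_nonneg b, ht.2]
    have h5 : |(a + t*b) ^ (p-1) - a ^ (p-1)| ≤ (p-1) * (3*a/2) ^ (p-2) * |b| := by
      calc _ ≤ (p-1) * (3*a/2) ^ (p-2) * (t * |b|) := h2
        _ ≤ _ := mul_le_mul_of_nonneg_left h4
          (mul_nonneg (by linarith) (Real.rpow_nonneg (by linarith) _))
    rw [Real.norm_eq_abs, hg', abs_mul]
    calc |(a + t*b) ^ (p-1) - a ^ (p-1)| * |b| ≤ ((p-1) * (3*a/2) ^ (p-2) * |b|) * |b| :=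
          mul_le_mul_of_nonneg_right h5 (abs_nonneg b)
      _ = (p-1) * (3*a/2) ^ (p-2) * b ^ 2 := by
          have hb2 : |b| * |b| = b ^ 2 := by rw [← sq_abs b]; ring
          rw [mul_assoc, hb2]
  -- mean value inequality on [0,1]
  have hmv := Convex.norm_image_sub_le_of_norm_hasDerivWithin_le
    (fun t ht => (hderiv t ht).hasDerivWithinAt) hbound (convex_Icc 0 1)
    (Set.left_mem_Icc.2 (by norm_num)) (Set.right_mem_Icc.2 (by norm_num))
  have hg1 : g 1 = |a + b| ^ p / p - |a| ^ p / p - |a| ^ (p-2) * a * b := by simp [hg]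
  have hg0 : g 0 = 0 := by simp [hg]
  rw [hg1, hg0, sub_zero, Real.norm_eq_abs] at hmv
  have e2 : (3*a/2) ^ (p-2) = (3/2) ^ (p-2) * a ^ (p-2) := by
    rw [← Real.mul_rpow (by norm_num) ha.le]
    ring_nf
  calc _ ≤ (p-1) * (3*a/2) ^ (p-2) * b ^ 2 * ‖(1:ℝ) - 0‖ := hmv
    _ = (p - 1) * (3 / 2) ^ (p - 2) * |a| ^ (p - 2) * b ^ 2 := by
        rw [e2, habs]; simp only [sub_zero, norm_one]; ring

lemma taylor {p : ℝ} (hp : 2 < p) :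
    ∃ C > 0, ∀ a b : ℝ, |(|a + b|) ^ p / p - |a| ^ p / p - |a| ^ (p-2) * a * b| ≤
      C * (|b| ^ p + |a| ^ (p-2) * b ^ 2) := by
  set C := 3 ^ p + 2 ^ p + 2 + (p-1) * (3/2) ^ (p-2) with hC
  have h3p : (0:ℝ) < 3 ^ p := Real.rpow_pos_of_pos (by norm_num) _
  have h2p : (0:ℝ) < 2 ^ p := Real.rpow_pos_of_pos (by norm_num) _
  have h32 : (0:ℝ) ≤ (p-1) * (3/2) ^ (p-2) :=
    mul_nonneg (by linarith) (Real.rpow_nonneg (by norm_num) _)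
  refine ⟨C, by rw [hC]; linarith, ?_⟩
  intro a b
  have hb2 : (0:ℝ) ≤ |a| ^ (p-2) * b ^ 2 :=
    mul_nonneg (Real.rpow_nonneg (abs_nonneg a) _) (sq_nonneg b)
  have hbp : (0:ℝ) ≤ |b| ^ p := Real.rpow_nonneg (abs_nonneg b) _
  by_cases hcase : 2 * |b| < |a|
  · -- Taylor regime
    have key : |(|a + b|) ^ p / p - |a| ^ p / p - |a| ^ (p-2) * a * b| ≤
        (p - 1) * (3 / 2) ^ (p - 2) * |a| ^ (p - 2) * b ^ 2 := by
      rcases lt_trichotomy a 0 with ha | ha | ha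
      · have key := taylor_pos hp (a := -a) (b := -b) (by linarith)
          (by rw [abs_neg]; rw [abs_of_neg ha] at hcase; linarith)
        rw [show -a + -b = -(a+b) by ring, abs_neg, abs_neg, neg_sq] at key
        have e : |a| ^ (p-2) * -a * -b = |a| ^ (p-2) * a * b := by ring
        rw [e] at key
        exact key
      · exfalso; rw [ha] at hcase; simp at hcase; linarith [abs_nonneg b, hcase]
      · have key := taylor_pos hp (a := a) (b := b) ha (by rwa [abs_of_pos ha] at hcase)
        exact key
    calc _ ≤ (p - 1) * (3 / 2) ^ (p - 2) * |a| ^ (p - 2) * b ^ 2 := key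
      _ ≤ C * (|b| ^ p + |a| ^ (p-2) * b ^ 2) := by
        rw [hC]
        nlinarith [mul_nonneg h32 hbp, mul_nonneg h3p.le hbp, mul_nonneg h2p.le hbp,
          mul_nonneg h3p.le hb2, mul_nonneg h2p.le hb2]
  · -- large b regime
    push_neg at hcase
    have hp1 : (1:ℝ) ≤ p := by linarith
    have habs : |a + b| ≤ 3 * |b| := by
      calc |a + b| ≤ |a| + |b| := abs_add_le a b
        _ ≤ 3 * |b| := by linarith
    have t1 : (|a + b|) ^ p ≤ 3 ^ p * |b| ^ p := by
      calc (|a+b|) ^ p ≤ (3 * |b|) ^ p :=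
            Real.rpow_le_rpow (abs_nonneg _) habs (by linarith)
        _ = 3 ^ p * |b| ^ p := Real.mul_rpow (by norm_num) (abs_nonneg b)
    have t2 : |a| ^ p ≤ 2 ^ p * |b| ^ p := by
      calc |a| ^ p ≤ (2 * |b|) ^ p :=
            Real.rpow_le_rpow (abs_nonneg _) hcase (by linarith)
        _ = 2 ^ p * |b| ^ p := Real.mul_rpow (by norm_num) (abs_nonneg b)
    have t3 : |(|a| ^ (p-2) * a * b)| ≤ 2 * (|a| ^ (p-2) * b ^ 2) := by
      rw [abs_mul, abs_mul, abs_of_nonneg (Real.rpow_nonneg (abs_nonneg a) _)]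
      calc |a| ^ (p-2) * |a| * |b| ≤ |a| ^ (p-2) * (2 * |b|) * |b| := by
            apply mul_le_mul_of_nonneg_right _ (abs_nonneg b)
            exact mul_le_mul_of_nonneg_left hcase (Real.rpow_nonneg (abs_nonneg a) _)
        _ = 2 * (|a| ^ (p-2) * (|b| * |b|)) := by ring
        _ = 2 * (|a| ^ (p-2) * b ^ 2) := by
            rw [show |b| * |b| = b ^ 2 by rw [← sq_abs b]; ring]
    have hA : (0:ℝ) ≤ (|a+b|) ^ p := Real.rpow_nonneg (abs_nonneg _) _
    have hB : (0:ℝ) ≤ |a| ^ p := Real.rpow_nonneg (abs_nonneg _) _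
    have hd1 : (|a+b|) ^ p / p ≤ (|a+b|) ^ p := div_le_self hA hp1
    have hd2 : |a| ^ p / p ≤ |a| ^ p := div_le_self hB hp1
    have hstep : |(|a + b|) ^ p / p - |a| ^ p / p - |a| ^ (p-2) * a * b|
        ≤ |(|a + b|) ^ p / p - |a| ^ p / p| + |(|a| ^ (p-2) * a * b)| := abs_sub _ _
    have hstep2 : |(|a + b|) ^ p / p - |a| ^ p / p| ≤ (|a+b|) ^ p / p + |a| ^ p / p := by
      have := abs_sub ((|a + b|) ^ p / p) (|a| ^ p / p)
      rwa [abs_of_nonneg (div_nonneg hA (by linarith)), abs_of_nonneg (div_nonneg hB (by linarith))] at this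
    rw [hC]
    nlinarith [mul_nonneg h32 hbp, mul_nonneg h32 hb2]

lemma helper_merge {p x : ℝ} (hx : 0 ≤ x) (hp : 2 < p) :
    x ^ (p-2) * x = x ^ (p-1) := by
  rcases eq_or_lt_of_le hx with h0 | h0
  · rw [← h0, Real.zero_rpow (by linarith : p - 2 ≠ 0),
      Real.zero_rpow (by linarith : p - 1 ≠ 0), zero_mul]
  · rw [← Real.rpow_add_one (ne_of_gt h0)]; ring_nf

lemma final_numeric {C₁ tp Jp Jr E X Y P : ℝ} (hC₁ : 0 < C₁) (htp : 0 < tp)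
    (hJp : 0 ≤ Jp) (hJr : 0 ≤ Jr) (hE0 : 0 ≤ E) (hX : 0 ≤ X) (hY : 0 ≤ Y)
    (hEP : E ≤ P) :
    C₁ * (tp * (X + Jp * E) + (2 * Y + 2 * (Jr ^ 2 * E))) + (E + (E / 2 + Y / 2) + 2 * Jr * E)
      ≤ (C₁ * tp + 2 * C₁ + C₁ * tp * Jp + 2 * C₁ * Jr ^ 2 + 2 * Jr + 2) * (X + Y + P) := by
  set K : ℝ := C₁ * tp + 2 * C₁ + C₁ * tp * Jp + 2 * C₁ * Jr ^ 2 + 2 * Jr + 2 with hK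
  have hKpos : 0 < K := by
    have h1 : (0:ℝ) ≤ C₁ * tp * Jp := by positivity
    have h2 : (0:ℝ) ≤ 2 * C₁ * Jr ^ 2 := by positivity
    have h3 : (0:ℝ) < C₁ * tp := by positivity
    nlinarith
  have key : C₁ * (tp * (X + Jp * E) + (2 * Y + 2 * (Jr ^ 2 * E))) + (E + (E / 2 + Y / 2) + 2 * Jr * E)
      ≤ K * (X + Y + E) := by
    have hc1 : 0 ≤ (K - C₁ * tp) * X := by
      apply mul_nonneg _ hX
      rw [hK]; nlinarith [mul_nonneg (mul_nonneg hC₁.le htp.le) hJp, mul_nonneg hC₁.le (sq_nonneg Jr)]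
    have hc2 : 0 ≤ (K - 2 * C₁ - 1/2) * Y := by
      apply mul_nonneg _ hY
      rw [hK]; nlinarith [mul_nonneg (mul_nonneg hC₁.le htp.le) hJp, mul_nonneg hC₁.le (sq_nonneg Jr),
        mul_nonneg hC₁.le htp.le]
    have hc3 : 0 ≤ (K - C₁ * tp * Jp - 2 * C₁ * Jr ^ 2 - 3/2 - 2 * Jr) * E := by
      apply mul_nonneg _ hE0
      rw [hK]; nlinarith [mul_nonneg hC₁.le htp.le]
    have expand : K * (X + Y + E)
        = (K - C₁ * tp) * X + (K - 2 * C₁ - 1/2) * Y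
          + (K - C₁ * tp * Jp - 2 * C₁ * Jr ^ 2 - 3/2 - 2 * Jr) * E
          + (C₁ * (tp * (X + Jp * E) + (2 * Y + 2 * (Jr ^ 2 * E))) + (E + (E / 2 + Y / 2) + 2 * Jr * E)) := by
      ring
    nlinarith [hc1, hc2, hc3, expand]
  have last : K * (X + Y + E) ≤ K * (X + Y + P) :=
    mul_le_mul_of_nonneg_left (by linarith) hKpos.le
  exact le_trans key last

lemma Kpos {C₁ tp Jp Jr : ℝ} (hC₁ : 0 < C₁) (htp : 0 < tp) (hJp : 0 ≤ Jp) (hJr : 0 ≤ Jr) :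
    0 < C₁ * tp + 2 * C₁ + C₁ * tp * Jp + 2 * C₁ * Jr ^ 2 + 2 * Jr + 2 := by
  have h1 : (0:ℝ) ≤ C₁ * tp * Jp := by positivity
  have h2 : (0:ℝ) ≤ 2 * C₁ * Jr ^ 2 := by positivity
  have h3 : (0:ℝ) < C₁ * tp := by positivity
  nlinarith

theorem key (p : ℝ) (hp2 : 2 < p) (hp4 : p ≤ 4) (J : ℕ) (hJ : 1 ≤ J) :
    ∃ C > 0, ∀ (y : Fin J → ℝ) (h : ℝ),
      |1/p * (|(∑ j, y j) + h|) ^ p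
        - 1/p * ∑ j, |y j| ^ p
        - ∑ j, |y j| ^ (p-2) * y j * h
        - ∑ j, ∑ k ∈ Finset.univ.erase j, |y j| ^ (p-2) * y j * y k|
      ≤ C * (|h| ^ p + (∑ j, |y j| ^ (p-2)) * h ^ 2
          + ∑ q ∈ Finset.univ.filter (fun q : Fin J × Fin J => q.1 < q.2),
              (min (|y q.1| ^ (p-2) * (y q.2) ^ 2) (|y q.2| ^ (p-2) * (y q.1) ^ 2)
               + min (|y q.1| ^ (p-1) * |y q.2|) (|y q.2| ^ (p-1) * |y q.1|))) := by
  obtain ⟨C₁, hC₁, htay⟩ := taylor hp2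
  have h2p : (0:ℝ) < 2 ^ p := Real.rpow_pos_of_pos (by norm_num) _
  have hJp : (0:ℝ) ≤ (J:ℝ) ^ p := Real.rpow_nonneg (Nat.cast_nonneg J) _
  have hJ0 : (0:ℝ) ≤ (J:ℝ) := Nat.cast_nonneg J
  set K : ℝ := C₁ * 2 ^ p + 2 * C₁ + C₁ * 2 ^ p * (J:ℝ) ^ p
      + 2 * C₁ * (J:ℝ) ^ 2 + 2 * (J:ℝ) + 2 with hK
  have hKpos : 0 < K := by
    rw [hK]; exact Kpos hC₁ h2p hJp hJ0
  refine ⟨K, hKpos, ?_⟩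
  intro y h
  haveI : NeZero J := ⟨by omega⟩
  obtain ⟨m, -, hm⟩ := Finset.exists_max_image (univ : Finset (Fin J)) (fun j => |y j|)
    Finset.univ_nonempty
  have hm' : ∀ j, |y j| ≤ |y m| := fun j => hm j (mem_univ j)
  set s := ∑ j ∈ univ.erase m, y j with hs
  set σ := ∑ j ∈ univ.erase m, |y j| with hσ
  set b := h + s with hb
  set Q : Fin J → ℝ := fun j => |y m| ^ (p-2) * (y j)^2 + |y j| ^ (p-1) * |y m| with hQ
  set E := ∑ j ∈ univ.erase m, Q j with hE
  set Sh := ∑ j, |y j| ^ (p-2) with hSh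
  set P := ∑ q ∈ Finset.univ.filter (fun q : Fin J × Fin J => q.1 < q.2),
              (min (|y q.1| ^ (p-2) * (y q.2) ^ 2) (|y q.2| ^ (p-2) * (y q.1) ^ 2)
               + min (|y q.1| ^ (p-1) * |y q.2|) (|y q.2| ^ (p-1) * |y q.1|)) with hP
  have hQ0 : ∀ j, 0 ≤ Q j := by
    intro j
    have h1 : (0:ℝ) ≤ |y m| ^ (p-2) * (y j)^2 := by positivity
    have h2 : (0:ℝ) ≤ |y j| ^ (p-1) * |y m| := by positivity
    rw [hQ]; dsimp; linarith
  have hE0 : 0 ≤ E := Finset.sum_nonneg fun j _ => hQ0 j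
  have hSh0 : 0 ≤ Sh := Finset.sum_nonneg fun j _ => by positivity
  have hShm : |y m| ^ (p-2) ≤ Sh :=
    Finset.single_le_sum (f := fun j => |y j| ^ (p-2)) (fun j _ => by positivity) (mem_univ m)
  have hcard : ((univ.erase m).card : ℝ) ≤ (J:ℝ) := by
    have h1 : (univ.erase m).card ≤ J := by
      simpa using Finset.card_le_card (Finset.erase_subset m (univ : Finset (Fin J)))
    exact_mod_cast h1
  -- Q j ≤ E for j in erase m
  have hQE : ∀ j ∈ univ.erase m, Q j ≤ E :=
    fun j hj => Finset.single_le_sum (fun i _ => hQ0 i) hj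
  -- |y j|^p ≤ Q j
  have hyp_le_Q : ∀ j, |y j| ^ p ≤ Q j := by
    intro j
    have h1 := helper_pow_le (abs_nonneg (y j)) (hm' j) (by linarith : (1:ℝ) ≤ p)
    have h2 : (0:ℝ) ≤ |y m| ^ (p-2) * (y j)^2 := by positivity
    rw [hQ]; dsimp; linarith
  -- E ≤ P
  have hEP : E ≤ P := by
    classical
    set ι : Fin J → Fin J × Fin J := fun j => if j < m then (j, m) else (m, j) with hι
    set term : Fin J × Fin J → ℝ := fun q =>
        min (|y q.1| ^ (p-2) * (y q.2) ^ 2) (|y q.2| ^ (p-2) * (y q.1) ^ 2)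
        + min (|y q.1| ^ (p-1) * |y q.2|) (|y q.2| ^ (p-1) * |y q.1|) with hterm
    have hmem : ∀ j ∈ univ.erase m, ι j ∈ univ.filter (fun q : Fin J × Fin J => q.1 < q.2) := by
      intro j hj
      have hjm : j ≠ m := Finset.ne_of_mem_erase hj
      rw [Finset.mem_filter]
      refine ⟨Finset.mem_univ _, ?_⟩
      by_cases hlt : j < m
      · simp [hι, hlt]
      · have hmj : m < j := lt_of_le_of_ne (not_lt.1 hlt) (Ne.symm hjm)
        simp [hι, hlt, hmj]
    have hinj : ∀ j ∈ univ.erase m, ∀ j' ∈ univ.erase m, ι j = ι j' → j = j' := by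
      intro j hj j' hj' heq
      have hjm : j ≠ m := Finset.ne_of_mem_erase hj
      have hjm' : j' ≠ m := Finset.ne_of_mem_erase hj'
      by_cases h1 : j < m <;> by_cases h2 : j' < m <;>
        simp only [hι, h1, h2, if_pos, if_neg, if_true, if_false, Prod.mk.injEq] at heq <;>
        tauto
    have hQterm : ∀ j ∈ univ.erase m, Q j ≤ term (ι j) := by
      intro j hj
      have hA := helper_minA (p := p) (abs_nonneg (y j)) (hm' j) (by linarith) hp4
      have hB := helper_minB (p := p) (abs_nonneg (y j)) (hm' j) (by linarith)
      rw [sq_abs, sq_abs] at hA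
      by_cases hlt : j < m
      · simp only [hι, if_pos hlt, hterm, hQ]
        exact add_le_add (le_min hA le_rfl) (le_min le_rfl hB)
      · simp only [hι, if_neg hlt, hterm, hQ]
        exact add_le_add (le_min le_rfl hA) (le_min hB le_rfl)
    have hterm0 : ∀ q : Fin J × Fin J, 0 ≤ term q := by
      intro q
      rw [hterm]
      apply add_nonneg
      · apply le_min <;> positivity
      · apply le_min <;> positivity
    calc E = ∑ j ∈ univ.erase m, Q j := hE
      _ ≤ ∑ j ∈ univ.erase m, term (ι j) := Finset.sum_le_sum hQterm
      _ = ∑ q ∈ (univ.erase m).image ι, term q := (Finset.sum_image hinj).symm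
      _ ≤ P := by
          rw [hP]
          apply Finset.sum_le_sum_of_subset_of_nonneg
          · intro q hq
            obtain ⟨j, hj, rfl⟩ := Finset.mem_image.1 hq
            exact hmem j hj
          · intro q _ _
            exact hterm0 q
  have hP0 : 0 ≤ P := le_trans hE0 hEP
  -- σ bounds
  have hσ0 : 0 ≤ σ := Finset.sum_nonneg fun j _ => abs_nonneg _
  have hσboth : σ ^ p ≤ (J:ℝ) ^ p * E ∧ |y m| ^ (p-2) * σ ^ 2 ≤ (J:ℝ) ^ 2 * E := by
    rcases Finset.eq_empty_or_nonempty (univ.erase m) with hemp | hne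
    · have hσz : σ = 0 := by rw [hσ, hemp, Finset.sum_empty]
      constructor
      · rw [hσz, Real.zero_rpow (by linarith : p ≠ 0)]
        exact mul_nonneg hJp hE0
      · rw [hσz]
        have : |y m| ^ (p-2) * (0:ℝ) ^ 2 = 0 := by ring
        rw [this]
        exact mul_nonneg (sq_nonneg _) hE0
    · obtain ⟨m', hm'mem, hmax'⟩ := Finset.exists_max_image _ (fun j => |y j|) hne
      have hcardE : ((univ.erase m).card : ℝ) ≤ (J:ℝ) := hcard
      have hσle : σ ≤ (J:ℝ) * |y m'| := by
        rw [hσ]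
        calc ∑ j ∈ univ.erase m, |y j| ≤ (univ.erase m).card • |y m'| :=
              Finset.sum_le_card_nsmul _ _ _ (fun j hj => hmax' j hj)
          _ = ((univ.erase m).card : ℝ) * |y m'| := nsmul_eq_mul _ _
          _ ≤ (J:ℝ) * |y m'| := mul_le_mul_of_nonneg_right hcardE (abs_nonneg _)
      have hQm' : Q m' ≤ E := hQE m' hm'mem
      have hy'p : |y m'| ^ p ≤ Q m' := hyp_le_Q m'
      constructor
      · calc σ ^ p ≤ ((J:ℝ) * |y m'|) ^ p := Real.rpow_le_rpow hσ0 hσle (by linarith)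
          _ = (J:ℝ) ^ p * |y m'| ^ p := Real.mul_rpow hJ0 (abs_nonneg _)
          _ ≤ (J:ℝ) ^ p * E := mul_le_mul_of_nonneg_left (le_trans hy'p hQm') hJp
      · have hmul := mul_le_mul hσle hσle hσ0 (by positivity : (0:ℝ) ≤ (J:ℝ) * |y m'|)
        have hσ2' : σ ^ 2 ≤ (J:ℝ) ^ 2 * (y m') ^ 2 := by
          nlinarith [sq_abs (y m')]
        calc |y m| ^ (p-2) * σ ^ 2 ≤ |y m| ^ (p-2) * ((J:ℝ) ^ 2 * (y m') ^ 2) :=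
              mul_le_mul_of_nonneg_left hσ2' (by positivity)
          _ = (J:ℝ) ^ 2 * (|y m| ^ (p-2) * (y m') ^ 2) := by ring
          _ ≤ (J:ℝ) ^ 2 * E := by
              apply mul_le_mul_of_nonneg_left _ (sq_nonneg (J:ℝ))
              refine le_trans ?_ hQm'
              have c2 : (0:ℝ) ≤ |y m'| ^ (p-1) * |y m| := by positivity
              rw [hQ]
              dsimp only
              linarith
  obtain ⟨hσp, hσ2⟩ := hσboth
  -- identity
  have hId : 1/p * (|(∑ j, y j) + h|) ^ p
        - 1/p * ∑ j, |y j| ^ p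
        - ∑ j, |y j| ^ (p-2) * y j * h
        - ∑ j, ∑ k ∈ Finset.univ.erase j, |y j| ^ (p-2) * y j * y k
      = ((|y m + b|) ^ p / p - |y m| ^ p / p - |y m| ^ (p-2) * (y m) * b)
        - ((∑ j ∈ univ.erase m, 1/p * |y j| ^ p)
           + (∑ j ∈ univ.erase m, |y j| ^ (p-2) * y j * h)
           + (∑ j ∈ univ.erase m, ∑ k ∈ Finset.univ.erase j, |y j| ^ (p-2) * y j * y k)) := by
    have h1 : ∑ j, |y j| ^ p = |y m| ^ p + ∑ j ∈ univ.erase m, |y j| ^ p :=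
      (Finset.add_sum_erase _ _ (mem_univ m)).symm
    have h2 : ∑ j, |y j| ^ (p-2) * y j * h
        = |y m| ^ (p-2) * y m * h + ∑ j ∈ univ.erase m, |y j| ^ (p-2) * y j * h :=
      (Finset.add_sum_erase _ _ (mem_univ m)).symm
    have h3 : ∑ j, ∑ k ∈ Finset.univ.erase j, |y j| ^ (p-2) * y j * y k
        = (∑ k ∈ univ.erase m, |y m| ^ (p-2) * y m * y k)
          + ∑ j ∈ univ.erase m, ∑ k ∈ Finset.univ.erase j, |y j| ^ (p-2) * y j * y k :=
      (Finset.add_sum_erase _ (fun j => ∑ k ∈ Finset.univ.erase j, |y j| ^ (p-2) * y j * y k)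
        (mem_univ m)).symm
    have h4 : ∑ k ∈ univ.erase m, |y m| ^ (p-2) * y m * y k = |y m| ^ (p-2) * y m * s := by
      rw [hs, Finset.mul_sum]
    have h5 : (∑ j, y j) + h = y m + b := by
      have hsum : ∑ j, y j = y m + s := by
        rw [hs]
        exact (Finset.add_sum_erase _ y (mem_univ m)).symm
      rw [hsum, hb]; ring
    have h6 : ∑ j ∈ univ.erase m, 1/p * |y j| ^ p
        = 1/p * ∑ j ∈ univ.erase m, |y j| ^ p := (Finset.mul_sum _ _ _).symm
    rw [h5, h1, h2, h3, h4, h6, hb]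
    ring
  -- bounds on remainder sums
  have hR1 : ∑ j ∈ univ.erase m, 1/p * |y j| ^ p ≤ E := by
    calc ∑ j ∈ univ.erase m, 1/p * |y j| ^ p ≤ ∑ j ∈ univ.erase m, Q j := by
          apply Finset.sum_le_sum
          intro j hj
          have h1 : |y j| ^ p ≤ Q j := hyp_le_Q j
          have h2 : (0:ℝ) ≤ |y j| ^ p := by positivity
          have hp0 : (0:ℝ) < p := by linarith
          have h4 : 1/p ≤ 1 := by rw [div_le_one hp0]; linarith
          have h3 : 1/p * |y j| ^ p ≤ 1 * |y j| ^ p := mul_le_mul_of_nonneg_right h4 h2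
          rw [one_mul] at h3
          exact le_trans h3 h1
      _ = E := hE.symm
  have hR1' : 0 ≤ ∑ j ∈ univ.erase m, 1/p * |y j| ^ p :=
    Finset.sum_nonneg fun j _ => by
      have : (0:ℝ) ≤ |y j| ^ p := by positivity
      have hp0 : (0:ℝ) < p := by linarith
      positivity
  have hR2 : |∑ j ∈ univ.erase m, |y j| ^ (p-2) * y j * h| ≤ E / 2 + Sh * h ^ 2 / 2 := by
    have step : ∀ j ∈ univ.erase m,
        |(|y j| ^ (p-2) * y j * h)| ≤ Q j / 2 + |y j| ^ (p-2) * h ^ 2 / 2 := by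
      intro j hj
      have hA : (0:ℝ) ≤ |y j| ^ (p-2) := by positivity
      have e1 : |(|y j| ^ (p-2) * y j * h)| = |y j| ^ (p-2) * |y j| * |h| := by
        rw [abs_mul, abs_mul, abs_of_nonneg hA]
      have am : |y j| * |h| ≤ ((y j) ^ 2 + h ^ 2) / 2 := by
        nlinarith [sq_nonneg (|y j| - |h|), sq_abs (y j), sq_abs h]
      have h6 : |y j| ^ (p-2) ≤ |y m| ^ (p-2) :=
        Real.rpow_le_rpow (abs_nonneg _) (hm' j) (by linarith)
      have h7 : |y j| ^ (p-2) * ((y j) ^ 2) ≤ |y m| ^ (p-2) * ((y j) ^ 2) :=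
        mul_le_mul_of_nonneg_right h6 (sq_nonneg _)
      have c2 : (0:ℝ) ≤ |y j| ^ (p-1) * |y m| := by positivity
      have hQj : |y m| ^ (p-2) * (y j) ^ 2 ≤ Q j := by
        rw [hQ]; dsimp only; linarith
      calc |(|y j| ^ (p-2) * y j * h)| = |y j| ^ (p-2) * (|y j| * |h|) := by rw [e1]; ring
        _ ≤ |y j| ^ (p-2) * (((y j) ^ 2 + h ^ 2) / 2) := mul_le_mul_of_nonneg_left am hA
        _ = |y j| ^ (p-2) * ((y j) ^ 2) / 2 + |y j| ^ (p-2) * h ^ 2 / 2 := by ring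
        _ ≤ Q j / 2 + |y j| ^ (p-2) * h ^ 2 / 2 := by linarith
    have habs := Finset.abs_sum_le_sum_abs (fun j => |y j| ^ (p-2) * y j * h) (univ.erase m)
    have hsum : ∑ j ∈ univ.erase m, |(|y j| ^ (p-2) * y j * h)|
        ≤ ∑ j ∈ univ.erase m, (Q j / 2 + |y j| ^ (p-2) * h ^ 2 / 2) := Finset.sum_le_sum step
    rw [Finset.sum_add_distrib] at hsum
    have ha2 : ∑ j ∈ univ.erase m, Q j / 2 = E / 2 := by
      rw [hE, Finset.sum_div]
    have hb2' : ∑ j ∈ univ.erase m, |y j| ^ (p-2) * h ^ 2 / 2 ≤ Sh * h ^ 2 / 2 := by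
      have hsub : ∑ j ∈ univ.erase m, |y j| ^ (p-2) ≤ Sh := by
        rw [hSh]
        apply Finset.sum_le_sum_of_subset_of_nonneg (Finset.erase_subset _ _)
        intro j _ _; positivity
      calc ∑ j ∈ univ.erase m, |y j| ^ (p-2) * h ^ 2 / 2
          = (∑ j ∈ univ.erase m, |y j| ^ (p-2)) * (h ^ 2 / 2) := by
            rw [Finset.sum_mul]
            exact Finset.sum_congr rfl (fun j _ => by ring)
        _ ≤ Sh * (h ^ 2 / 2) := mul_le_mul_of_nonneg_right hsub (by positivity)
        _ = Sh * h ^ 2 / 2 := by ring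
    linarith
  have hR3 : |∑ j ∈ univ.erase m, ∑ k ∈ Finset.univ.erase j, |y j| ^ (p-2) * y j * y k|
      ≤ 2 * (J:ℝ) * E := by
    classical
    set Q' : Fin J → ℝ := fun k => if k = m then 0 else Q k with hQ'
    have hQ'0 : ∀ k, 0 ≤ Q' k := by
      intro k
      rw [hQ']
      dsimp only
      split
      · exact le_refl 0
      · exact hQ0 k
    have hQ'sum : ∑ k, Q' k = E := by
      rw [hE]
      rw [← Finset.sum_erase (univ : Finset (Fin J)) (by simp [hQ'] : Q' m = 0)]
      apply Finset.sum_congr rfl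
      intro k hk
      rw [hQ']
      dsimp only
      rw [if_neg (Finset.ne_of_mem_erase hk)]
    have term : ∀ j ∈ univ.erase m, ∀ k ∈ Finset.univ.erase j,
        |(|y j| ^ (p-2) * y j * y k)| ≤ Q j + Q' k := by
      intro j hj k hk
      have hA : (0:ℝ) ≤ |y j| ^ (p-2) := by positivity
      have e0 : |(|y j| ^ (p-2) * y j * y k)| = |y j| ^ (p-2) * |y j| * |y k| := by
        rw [abs_mul, abs_mul, abs_of_nonneg hA]
      have e1 : |y j| ^ (p-2) * |y j| = |y j| ^ (p-1) := helper_merge (abs_nonneg _) hp2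
      rw [e0, e1]
      by_cases hkm : k = m
      · rw [hkm]
        have c1 : (0:ℝ) ≤ |y m| ^ (p-2) * (y j) ^ 2 := by positivity
        have hQj : |y j| ^ (p-1) * |y m| ≤ Q j := by
          rw [hQ]; dsimp only; linarith
        have hQ'm : Q' m = 0 := by rw [hQ']; dsimp only; exact if_pos rfl
        rw [hQ'm]
        linarith
      · rw [hQ']; dsimp only; rw [if_neg hkm]
        have h1 : |y j| ^ (p-1) ≤ |y m| ^ (p-2) * |y j| :=
          helper_pm1 (abs_nonneg _) (hm' j) (by linarith)
        have h2 : |y j| * |y k| ≤ ((y j) ^ 2 + (y k) ^ 2) / 2 := by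
          nlinarith [sq_nonneg (|y j| - |y k|), sq_abs (y j), sq_abs (y k)]
        have hgm : (0:ℝ) ≤ |y m| ^ (p-2) := by positivity
        have expand : |y m| ^ (p-2) * (((y j) ^ 2 + (y k) ^ 2) / 2)
            = (|y m| ^ (p-2) * (y j) ^ 2) / 2 + (|y m| ^ (p-2) * (y k) ^ 2) / 2 := by ring
        have c1 : (0:ℝ) ≤ |y j| ^ (p-1) * |y m| := by positivity
        have c2 : (0:ℝ) ≤ |y k| ^ (p-1) * |y m| := by positivity
        have hQj : (|y m| ^ (p-2) * (y j) ^ 2) / 2 ≤ Q j := by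
          have : (0:ℝ) ≤ |y m| ^ (p-2) * (y j) ^ 2 := by positivity
          rw [hQ]; dsimp only; linarith
        have hQk : (|y m| ^ (p-2) * (y k) ^ 2) / 2 ≤ Q k := by
          have : (0:ℝ) ≤ |y m| ^ (p-2) * (y k) ^ 2 := by positivity
          rw [hQ]; dsimp only; linarith
        calc |y j| ^ (p-1) * |y k| ≤ (|y m| ^ (p-2) * |y j|) * |y k| :=
              mul_le_mul_of_nonneg_right h1 (abs_nonneg _)
          _ = |y m| ^ (p-2) * (|y j| * |y k|) := by ring
          _ ≤ |y m| ^ (p-2) * (((y j) ^ 2 + (y k) ^ 2) / 2) := mul_le_mul_of_nonneg_left h2 hgm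
          _ ≤ Q j + Q k := by rw [expand]; linarith
    have inner : ∀ j ∈ univ.erase m,
        |∑ k ∈ Finset.univ.erase j, |y j| ^ (p-2) * y j * y k| ≤ (J:ℝ) * Q j + E := by
      intro j hj
      have habs := Finset.abs_sum_le_sum_abs (fun k => |y j| ^ (p-2) * y j * y k)
        (Finset.univ.erase j)
      have hsum : ∑ k ∈ Finset.univ.erase j, |(|y j| ^ (p-2) * y j * y k)|
          ≤ ∑ k ∈ Finset.univ.erase j, (Q j + Q' k) := Finset.sum_le_sum (term j hj)
      rw [Finset.sum_add_distrib] at hsum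
      have hconst : ∑ _k ∈ Finset.univ.erase j, Q j = ((Finset.univ.erase j).card : ℝ) * Q j := by
        rw [Finset.sum_const, nsmul_eq_mul]
      have hcardj : ((Finset.univ.erase j).card : ℝ) ≤ (J:ℝ) := by
        have h1 : (Finset.univ.erase j).card ≤ J := by
          simpa using Finset.card_le_card (Finset.erase_subset j (univ : Finset (Fin J)))
        exact_mod_cast h1
      have hc2 : ((Finset.univ.erase j).card : ℝ) * Q j ≤ (J:ℝ) * Q j :=
        mul_le_mul_of_nonneg_right hcardj (hQ0 j)
      have hQ'le : ∑ k ∈ Finset.univ.erase j, Q' k ≤ E := by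
        rw [← hQ'sum]
        apply Finset.sum_le_sum_of_subset_of_nonneg (Finset.erase_subset _ _)
        intro k _ _
        exact hQ'0 k
      linarith
    have houter := Finset.abs_sum_le_sum_abs
      (fun j => ∑ k ∈ Finset.univ.erase j, |y j| ^ (p-2) * y j * y k) (univ.erase m)
    have hsum2 : ∑ j ∈ univ.erase m, |∑ k ∈ Finset.univ.erase j, |y j| ^ (p-2) * y j * y k|
        ≤ ∑ j ∈ univ.erase m, ((J:ℝ) * Q j + E) := Finset.sum_le_sum inner
    rw [Finset.sum_add_distrib] at hsum2
    have h8 : ∑ j ∈ univ.erase m, (J:ℝ) * Q j = (J:ℝ) * E := by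
      rw [hE, Finset.mul_sum]
    have h9 : ∑ _j ∈ univ.erase m, E = ((univ.erase m).card : ℝ) * E := by
      rw [Finset.sum_const, nsmul_eq_mul]
    have h10 : ((univ.erase m).card : ℝ) * E ≤ (J:ℝ) * E := mul_le_mul_of_nonneg_right hcard hE0
    rw [h8, h9] at hsum2
    linarith
  -- taylor bound
  have hX := htay (y m) b
  have hbabs : |b| ≤ |h| + σ := by
    rw [hb]
    calc |h + s| ≤ |h| + |s| := abs_add_le h s
      _ ≤ |h| + σ := by
        have := Finset.abs_sum_le_sum_abs y (univ.erase m)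
        rw [hs, hσ]; linarith
  have hbp : |b| ^ p ≤ 2 ^ p * (|h| ^ p + (J:ℝ) ^ p * E) := by
    calc |b| ^ p ≤ (|h| + σ) ^ p :=
          Real.rpow_le_rpow (abs_nonneg b) hbabs (by linarith)
      _ ≤ 2 ^ p * (|h| ^ p + σ ^ p) := helper_addpow (abs_nonneg h) hσ0 (by linarith)
      _ ≤ 2 ^ p * (|h| ^ p + (J:ℝ) ^ p * E) := by
          apply mul_le_mul_of_nonneg_left _ h2p.le
          linarith
  have hb2 : |y m| ^ (p-2) * b ^ 2 ≤ 2 * (Sh * h ^ 2) + 2 * ((J:ℝ) ^ 2 * E) := by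
    have hs2 : s ^ 2 ≤ σ ^ 2 := by
      have h1 : |s| ≤ σ := by
        have := Finset.abs_sum_le_sum_abs y (univ.erase m)
        rw [hs, hσ]; linarith
      nlinarith [abs_nonneg s, sq_abs s]
    have hbb : b ^ 2 ≤ 2 * h ^ 2 + 2 * σ ^ 2 := by
      rw [hb]; nlinarith [sq_nonneg (h - s)]
    have hgm0 : (0:ℝ) ≤ |y m| ^ (p-2) := by positivity
    have step : |y m| ^ (p-2) * b ^ 2 ≤ |y m| ^ (p-2) * (2 * h ^ 2 + 2 * σ ^ 2) :=
      mul_le_mul_of_nonneg_left hbb hgm0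
    have step2 : |y m| ^ (p-2) * h ^ 2 ≤ Sh * h ^ 2 :=
      mul_le_mul_of_nonneg_right hShm (sq_nonneg h)
    have expand : |y m| ^ (p-2) * (2 * h ^ 2 + 2 * σ ^ 2)
        = 2 * (|y m| ^ (p-2) * h ^ 2) + 2 * (|y m| ^ (p-2) * σ ^ 2) := by ring
    linarith
  -- assemble
  rw [hId]
  have habs_total : |((|y m + b|) ^ p / p - |y m| ^ p / p - |y m| ^ (p-2) * (y m) * b)
        - ((∑ j ∈ univ.erase m, 1/p * |y j| ^ p)
           + (∑ j ∈ univ.erase m, |y j| ^ (p-2) * y j * h)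
           + (∑ j ∈ univ.erase m, ∑ k ∈ Finset.univ.erase j, |y j| ^ (p-2) * y j * y k))|
      ≤ |(|y m + b|) ^ p / p - |y m| ^ p / p - |y m| ^ (p-2) * (y m) * b|
        + ((∑ j ∈ univ.erase m, 1/p * |y j| ^ p)
           + |∑ j ∈ univ.erase m, |y j| ^ (p-2) * y j * h|
           + |∑ j ∈ univ.erase m, ∑ k ∈ Finset.univ.erase j, |y j| ^ (p-2) * y j * y k|) := by
    have t := abs_sub ((|y m + b|) ^ p / p - |y m| ^ p / p - |y m| ^ (p-2) * (y m) * b)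
      ((∑ j ∈ univ.erase m, 1/p * |y j| ^ p)
           + (∑ j ∈ univ.erase m, |y j| ^ (p-2) * y j * h)
           + (∑ j ∈ univ.erase m, ∑ k ∈ Finset.univ.erase j, |y j| ^ (p-2) * y j * y k))
    have t2 := abs_add_le ((∑ j ∈ univ.erase m, 1/p * |y j| ^ p)
           + (∑ j ∈ univ.erase m, |y j| ^ (p-2) * y j * h))
      (∑ j ∈ univ.erase m, ∑ k ∈ Finset.univ.erase j, |y j| ^ (p-2) * y j * y k)
    have t3 := abs_add_le (∑ j ∈ univ.erase m, 1/p * |y j| ^ p)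
      (∑ j ∈ univ.erase m, |y j| ^ (p-2) * y j * h)
    rw [abs_of_nonneg hR1'] at t3
    linarith
  have hXb : |(|y m + b|) ^ p / p - |y m| ^ p / p - |y m| ^ (p-2) * (y m) * b|
      ≤ C₁ * (2 ^ p * (|h| ^ p + (J:ℝ) ^ p * E) + (2 * (Sh * h ^ 2) + 2 * ((J:ℝ) ^ 2 * E))) := by
    calc _ ≤ C₁ * (|b| ^ p + |y m| ^ (p-2) * b ^ 2) := hX
      _ ≤ _ := by
        apply mul_le_mul_of_nonneg_left _ hC₁.le
        linarith
  have hhp0 : (0:ℝ) ≤ |h| ^ p := by positivity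
  have hh20 : (0:ℝ) ≤ Sh * h ^ 2 := mul_nonneg hSh0 (sq_nonneg h)
  calc _ ≤ _ := habs_total
    _ ≤ C₁ * (2 ^ p * (|h| ^ p + (J:ℝ) ^ p * E) + (2 * (Sh * h ^ 2) + 2 * ((J:ℝ) ^ 2 * E)))
        + (E + (E / 2 + Sh * h ^ 2 / 2) + 2 * (J:ℝ) * E) := by linarith
    _ ≤ K * (|h| ^ p + Sh * h ^ 2 + P) := by
        rw [hK]
        exact final_numeric hC₁ h2p hJp hJ0 hE0 hhp0 hh20 hEP

theorem pointwise_potential_expansion (N : ℕ) (hN : 5 ≤ N) (J : ℕ) (hJ : 1 ≤ J) :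
    ∃ C > 0, ∀ (y : Fin J → ℝ) (h : ℝ),
      |((N : ℝ) - 2) / (2 * (N : ℝ)) * |(∑ j, y j) + h| ^ (2 * (N : ℝ) / ((N : ℝ) - 2))
        - ((N : ℝ) - 2) / (2 * (N : ℝ)) * ∑ j, |y j| ^ (2 * (N : ℝ) / ((N : ℝ) - 2))
        - ∑ j, |y j| ^ ((4 : ℝ) / ((N : ℝ) - 2)) * y j * h
        - ∑ j, ∑ k ∈ Finset.univ.erase j,
            |y j| ^ ((4 : ℝ) / ((N : ℝ) - 2)) * y j * y k|
      ≤ C * (|h| ^ (2 * (N : ℝ) / ((N : ℝ) - 2))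
          + (∑ j, |y j| ^ ((4 : ℝ) / ((N : ℝ) - 2))) * h ^ 2
          + ∑ p ∈ Finset.univ.filter (fun p : Fin J × Fin J => p.1 < p.2),
              (min (|y p.1| ^ ((4 : ℝ) / ((N : ℝ) - 2)) * (y p.2) ^ 2)
                   (|y p.2| ^ ((4 : ℝ) / ((N : ℝ) - 2)) * (y p.1) ^ 2)
               + min (|y p.1| ^ (((N : ℝ) + 2) / ((N : ℝ) - 2)) * |y p.2|)
                     (|y p.2| ^ (((N : ℝ) + 2) / ((N : ℝ) - 2)) * |y p.1|))) := by
  have hN5 : (5:ℝ) ≤ (N:ℝ) := by exact_mod_cast hN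
  have hN2 : (0:ℝ) < (N:ℝ) - 2 := by linarith
  set pr : ℝ := 2 * (N : ℝ) / ((N : ℝ) - 2) with hpr
  have hp2 : 2 < pr := by
    rw [hpr, lt_div_iff₀ hN2]; linarith
  have hp4 : pr ≤ 4 := by
    rw [hpr, div_le_iff₀ hN2]; linarith
  have e0 : ((N : ℝ) - 2) / (2 * (N : ℝ)) = 1 / pr := by
    rw [hpr]; exact (one_div_div _ _).symm
  have e1 : (4 : ℝ) / ((N : ℝ) - 2) = pr - 2 := by
    rw [hpr]; field_simp; ring
  have e2 : ((N : ℝ) + 2) / ((N : ℝ) - 2) = pr - 1 := by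
    rw [hpr]; field_simp; ring
  rw [e0]
  simp only [e1, e2]
  exact key pr hp2 hp4 J hJ
end

section
/- Let N ≥ 5 and W_{(λ)}, W_{[λ]}(x) = λ^{−N/2}W(x/λ). Setting ΛW = x·∇W + ((N−2)/2)W, there is C = C(N) such that for 0 < λ < μ: ∫_{ℝ^N} |(ΛW)_{[λ]}(ΛW)_{[μ]}| dx ≤ C(λ/μ)^{N/2−2}. -/
open MeasureTheory Real

/-- The `L²`-invariant rescaling `(ΛW)_{[λ]}(x) = λ^{-N/2} ΛW(x/λ)`. -/
noncomputable def LamWb (N : ℕ) (lam : ℝ) (x : EuclideanSpace ℝ (Fin N)) : ℝ :=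
  lam ^ (-(N : ℝ) / 2) * LamW N (lam⁻¹ • x)

open Set Metric

section aux

variable {N : ℕ}

private lemma c_pos (hN : 5 ≤ N) : (0:ℝ) < (N : ℝ) * ((N : ℝ) - 2) := by
  have : (5:ℝ) ≤ N := by exact_mod_cast hN
  nlinarith

private lemma u_pos (hN : 5 ≤ N) (x : EuclideanSpace ℝ (Fin N)) :
    0 < 1 + ‖x‖ ^ 2 / ((N : ℝ) * ((N : ℝ) - 2)) := by
  have := c_pos hN
  positivity

/-- gradient of W -/
lemma hasGradientAt_W (hN : 5 ≤ N) (x : EuclideanSpace ℝ (Fin N)) :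
    HasGradientAt (W N)
      (((((2:ℝ) - N) / 2) * (1 + ‖x‖ ^ 2 / ((N : ℝ) * ((N : ℝ) - 2)))
          ^ (((2:ℝ) - N) / 2 - 1) * (2 / ((N : ℝ) * ((N : ℝ) - 2)))) • x) x := by
  set c : ℝ := (N : ℝ) * ((N : ℝ) - 2) with hc
  have hcpos : 0 < c := c_pos hN
  have hu : HasFDerivAt (fun y : EuclideanSpace ℝ (Fin N) => 1 + ‖y‖ ^ 2 / c)
      ((2 / c) • (innerSL ℝ x)) x := by
    have hinner : HasFDerivAt (fun y : EuclideanSpace ℝ (Fin N) => (inner ℝ y y : ℝ))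
        ((2:ℝ) • (innerSL ℝ x)) x := by
      have := (hasFDerivAt_id x).inner ℝ (hasFDerivAt_id x)
      refine this.congr_fderiv ?_
      ext v
      simp [fderivInnerCLM_apply, real_inner_comm, two_mul]
    have : HasFDerivAt (fun y : EuclideanSpace ℝ (Fin N) => 1 + ‖y‖ ^ 2 / c)
        (c⁻¹ • ((2:ℝ) • (innerSL ℝ x))) x := by
      have h2 : (fun y : EuclideanSpace ℝ (Fin N) => 1 + ‖y‖ ^ 2 / c)
          = fun y => 1 + (inner ℝ y y : ℝ) * c⁻¹ := by
        funext y
        rw [real_inner_self_eq_norm_sq, div_eq_mul_inv]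
      rw [h2]
      exact ((hinner.mul_const c⁻¹).const_add 1)
    convert this using 1
    rw [smul_smul]
    congr 1
    rw [div_eq_mul_inv, mul_comm]
  have hW : HasFDerivAt (W N)
      (((((2:ℝ) - N) / 2) * (1 + ‖x‖ ^ 2 / c) ^ (((2:ℝ) - N) / 2 - 1)) •
        ((2 / c) • (innerSL ℝ x))) x := by
    have hupos := u_pos hN x
    have := hu.rpow_const (p := ((2:ℝ) - N) / 2) (Or.inl (ne_of_gt hupos))
    exact this
  rw [hasGradientAt_iff_hasFDerivAt]
  refine hW.congr_fderiv ?_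
  ext v
  simp only [InnerProductSpace.toDual_apply_apply, ContinuousLinearMap.coe_smul', Pi.smul_apply,
    innerSL_apply_apply, smul_eq_mul, real_inner_smul_left]
  ring

lemma gradient_W (hN : 5 ≤ N) (x : EuclideanSpace ℝ (Fin N)) :
    gradient (W N) x
      = (((((2:ℝ) - N) / 2) * (1 + ‖x‖ ^ 2 / ((N : ℝ) * ((N : ℝ) - 2)))
          ^ (((2:ℝ) - N) / 2 - 1) * (2 / ((N : ℝ) * ((N : ℝ) - 2)))) • x) :=
  (hasGradientAt_W hN x).gradient

/-- The key closed formula for `LamW`. -/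
lemma LamW_eq (hN : 5 ≤ N) (x : EuclideanSpace ℝ (Fin N)) :
    LamW N x = (((N:ℝ) - 2) / 2) *
      (1 - ‖x‖ ^ 2 / ((N : ℝ) * ((N : ℝ) - 2))) *
      (1 + ‖x‖ ^ 2 / ((N : ℝ) * ((N : ℝ) - 2))) ^ (((2:ℝ) - N) / 2 - 1) := by
  set c : ℝ := (N : ℝ) * ((N : ℝ) - 2) with hc
  have hcpos : 0 < c := c_pos hN
  have hupos : 0 < 1 + ‖x‖ ^ 2 / c := u_pos hN x
  set u : ℝ := 1 + ‖x‖ ^ 2 / c with hu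
  set p : ℝ := ((2:ℝ) - N) / 2 with hp
  have h1 : (inner ℝ x (gradient (W N) x) : ℝ) = (p * u ^ (p - 1) * (2 / c)) * ‖x‖ ^ 2 := by
    rw [gradient_W hN x, real_inner_smul_right, real_inner_self_eq_norm_sq]
  have h2 : W N x = u ^ p := rfl
  have h3 : u ^ p = u ^ (p - 1) * u := by
    rw [← Real.rpow_add_one (ne_of_gt hupos) (p - 1), sub_add_cancel]
  rw [LamW, h1, h2, h3]
  have hN2 : ((N:ℝ) - 2) / 2 = -p := by rw [hp]; ring_nf
  rw [hN2, hu]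
  field_simp
  ring

end aux

/-- The constant in the pointwise bounds on `LamW`. -/
noncomputable def Acst (N : ℕ) : ℝ :=
  (((N:ℝ) - 2) / 2) * ((N : ℝ) * ((N : ℝ) - 2)) ^ (((N:ℝ) - 2) / 2)

lemma Acst_pos (hN : 5 ≤ N) : 0 < Acst N := by
  have h5 : (5:ℝ) ≤ N := by exact_mod_cast hN
  have := c_pos hN
  unfold Acst
  have : (0:ℝ) < ((N : ℝ) * ((N : ℝ) - 2)) ^ (((N:ℝ) - 2) / 2) :=
    Real.rpow_pos_of_pos (c_pos hN) _
  nlinarith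

private lemma LamW_abs_le (hN : 5 ≤ N) (x : EuclideanSpace ℝ (Fin N)) :
    |LamW N x| ≤ (((N:ℝ) - 2) / 2) *
      (1 + ‖x‖ ^ 2 / ((N : ℝ) * ((N : ℝ) - 2))) ^ (((2:ℝ) - N) / 2) := by
  set c : ℝ := (N : ℝ) * ((N : ℝ) - 2) with hc
  have hcpos : 0 < c := c_pos hN
  have hupos : 0 < 1 + ‖x‖ ^ 2 / c := u_pos hN x
  set u : ℝ := 1 + ‖x‖ ^ 2 / c with hu
  set p : ℝ := ((2:ℝ) - N) / 2 with hp
  have h5 : (5:ℝ) ≤ N := by exact_mod_cast hN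
  have hs : 0 ≤ ‖x‖ ^ 2 / c := by positivity
  rw [LamW_eq hN x]
  rw [mul_assoc, abs_mul, abs_mul]
  have e1 : |(((N:ℝ) - 2) / 2)| = (((N:ℝ) - 2) / 2) := abs_of_nonneg (by linarith)
  have e2 : |u ^ (p - 1)| = u ^ (p - 1) := abs_of_nonneg (Real.rpow_nonneg hupos.le _)
  have e3 : |1 - ‖x‖ ^ 2 / c| ≤ u := by
    rw [abs_le]
    constructor <;> simp only [hu] <;> nlinarith
  calc |(((N:ℝ) - 2) / 2)| * (|1 - ‖x‖ ^ 2 / c| * |u ^ (p - 1)|)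
      ≤ (((N:ℝ) - 2) / 2) * (u * u ^ (p - 1)) := by
        rw [e1, e2]
        have hup : 0 ≤ u ^ (p - 1) := Real.rpow_nonneg hupos.le _
        have h0 : 0 ≤ |1 - ‖x‖ ^ 2 / c| := abs_nonneg _
        have hN2 : 0 ≤ ((N:ℝ) - 2) / 2 := by linarith
        exact mul_le_mul_of_nonneg_left (mul_le_mul_of_nonneg_right e3 hup) hN2
    _ = (((N:ℝ) - 2) / 2) * u ^ p := by
        rw [mul_comm u (u ^ (p-1)), ← Real.rpow_add_one (ne_of_gt hupos) (p - 1),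
          sub_add_cancel]

private lemma p_nonpos (hN : 5 ≤ N) : (((2:ℝ) - N) / 2) ≤ 0 := by
  have h5 : (5:ℝ) ≤ N := by exact_mod_cast hN
  linarith

example (hN : 5 ≤ N) : (((2:ℝ) - N) / 2) ≤ 0 := p_nonpos hN

/-- First pointwise bound: `|LamW x| ≤ A (1+‖x‖²)^{(2-N)/2}`. -/
lemma LamW_bound1 (hN : 5 ≤ N) (x : EuclideanSpace ℝ (Fin N)) :
    |LamW N x| ≤ Acst N * (1 + ‖x‖ ^ 2) ^ (((2:ℝ) - N) / 2) := by
  set c : ℝ := (N : ℝ) * ((N : ℝ) - 2) with hc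
  have hcpos : 0 < c := c_pos hN
  have h5 : (5:ℝ) ≤ N := by exact_mod_cast hN
  have hc1 : 1 ≤ c := by nlinarith
  set p : ℝ := ((2:ℝ) - N) / 2 with hp
  refine (LamW_abs_le hN x).trans ?_
  have hq : (1 + ‖x‖ ^ 2) / c ≤ 1 + ‖x‖ ^ 2 / c := by
    rw [div_le_iff₀ hcpos]
    have hdc : ‖x‖ ^ 2 / c * c = ‖x‖ ^ 2 := div_mul_cancel₀ _ (ne_of_gt hcpos)
    nlinarith [sq_nonneg ‖x‖]
  have h1 : (1 + ‖x‖ ^ 2 / c) ^ p ≤ ((1 + ‖x‖ ^ 2) / c) ^ p :=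
    Real.rpow_le_rpow_of_nonpos (by positivity) hq (show p ≤ 0 by rw [hp]; linarith)
  have h2 : ((1 + ‖x‖ ^ 2) / c) ^ p = (1 + ‖x‖ ^ 2) ^ p * c ^ (((N:ℝ) - 2) / 2) := by
    rw [Real.div_rpow (by positivity) hcpos.le, div_eq_mul_inv, ← Real.rpow_neg hcpos.le]
    congr 1
    rw [hp]; ring_nf
  calc (((N:ℝ) - 2) / 2) * (1 + ‖x‖ ^ 2 / c) ^ p
      ≤ (((N:ℝ) - 2) / 2) * ((1 + ‖x‖ ^ 2) ^ p * c ^ (((N:ℝ) - 2) / 2)) := by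
        rw [← h2]
        exact mul_le_mul_of_nonneg_left h1 (by linarith)
    _ = Acst N * (1 + ‖x‖ ^ 2) ^ p := by rw [Acst]; ring

/-- Second pointwise bound: `|LamW x| ≤ A ‖x‖^{2-N}` for `x ≠ 0`. -/
lemma LamW_bound2 (hN : 5 ≤ N) {x : EuclideanSpace ℝ (Fin N)} (hx : x ≠ 0) :
    |LamW N x| ≤ Acst N * ‖x‖ ^ ((2:ℝ) - N) := by
  set c : ℝ := (N : ℝ) * ((N : ℝ) - 2) with hc
  have hcpos : 0 < c := c_pos hN
  have h5 : (5:ℝ) ≤ N := by exact_mod_cast hN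
  have hc1 : 1 ≤ c := by nlinarith
  set p : ℝ := ((2:ℝ) - N) / 2 with hp
  have hxn : 0 < ‖x‖ := norm_pos_iff.2 hx
  refine (LamW_abs_le hN x).trans ?_
  have hq : ‖x‖ ^ 2 / c ≤ 1 + ‖x‖ ^ 2 / c := by linarith [sq_nonneg ‖x‖, div_nonneg (sq_nonneg ‖x‖) hcpos.le]
  have h1 : (1 + ‖x‖ ^ 2 / c) ^ p ≤ (‖x‖ ^ 2 / c) ^ p :=
    Real.rpow_le_rpow_of_nonpos (by positivity) hq (show p ≤ 0 by rw [hp]; linarith)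
  have h2 : (‖x‖ ^ 2 / c) ^ p = ‖x‖ ^ ((2:ℝ) - N) * c ^ (((N:ℝ) - 2) / 2) := by
    rw [Real.div_rpow (by positivity) hcpos.le, div_eq_mul_inv, ← Real.rpow_neg hcpos.le]
    congr 1
    · rw [← Real.rpow_natCast ‖x‖ 2, ← Real.rpow_mul (norm_nonneg x)]
      congr 1
      rw [hp]
      push_cast
      ring
    · rw [hp]; ring_nf
  calc (((N:ℝ) - 2) / 2) * (1 + ‖x‖ ^ 2 / c) ^ p
      ≤ (((N:ℝ) - 2) / 2) * (‖x‖ ^ ((2:ℝ) - N) * c ^ (((N:ℝ) - 2) / 2)) := by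
        rw [← h2]
        exact mul_le_mul_of_nonneg_left h1 (by linarith)
    _ = Acst N * ‖x‖ ^ ((2:ℝ) - N) := by rw [Acst]; ring
variable {N : ℕ}

lemma integrableOn_ball_rpow (hN : 5 ≤ N) :
    IntegrableOn (fun y : EuclideanSpace ℝ (Fin N) => ‖y‖ ^ ((2:ℝ) - N))
      (Metric.ball 0 1) volume := by
  have h5 : (5:ℝ) ≤ N := by exact_mod_cast hN
  set a : ℝ := (2:ℝ) - N with haa
  have ha : a < 0 := by rw [haa]; linarith
  have hmeas : Measurable fun y : EuclideanSpace ℝ (Fin N) => ‖y‖ ^ a := by fun_prop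
  constructor
  · exact hmeas.aestronglyMeasurable
  · rw [hasFiniteIntegral_iff_norm]
    have hnn : ∀ y : EuclideanSpace ℝ (Fin N), 0 ≤ ‖y‖ ^ a :=
      fun y => Real.rpow_nonneg (norm_nonneg y) _
    have heq : ∀ y : EuclideanSpace ℝ (Fin N),
        ENNReal.ofReal ‖‖y‖ ^ a‖ = ENNReal.ofReal (‖y‖ ^ a) := by
      intro y; rw [Real.norm_eq_abs, abs_of_nonneg (hnn y)]
    simp_rw [heq]
    rw [lintegral_eq_lintegral_meas_le _ (Filter.Eventually.of_forall hnn)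
      hmeas.aemeasurable]
    set ν := volume.restrict (Metric.ball (0 : EuclideanSpace ℝ (Fin N)) 1) with hν
    calc ∫⁻ t in Ioi 0, ν {y | t ≤ ‖y‖ ^ a}
        ≤ ∫⁻ t in Ioc 0 1 ∪ Ioi 1, ν {y | t ≤ ‖y‖ ^ a} :=
          lintegral_mono_set Ioi_subset_Ioc_union_Ioi
      _ ≤ (∫⁻ t in Ioc 0 1, ν {y | t ≤ ‖y‖ ^ a}) + ∫⁻ t in Ioi 1, ν {y | t ≤ ‖y‖ ^ a} :=
          lintegral_union_le _ _ _
      _ < ⊤ := by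
          refine ENNReal.add_lt_top.2 ⟨?_, ?_⟩
          · calc (∫⁻ t in Ioc 0 1, ν {y | t ≤ ‖y‖ ^ a})
                ≤ ∫⁻ _ in Ioc (0:ℝ) 1, volume (Metric.ball (0 : EuclideanSpace ℝ (Fin N)) 1) := by
                  refine lintegral_mono fun t => ?_
                  calc ν {y | t ≤ ‖y‖ ^ a} ≤ ν univ := measure_mono (subset_univ _)
                    _ = volume (Metric.ball (0 : EuclideanSpace ℝ (Fin N)) 1) := by
                        rw [hν, Measure.restrict_apply_univ]
              _ = volume (Metric.ball (0 : EuclideanSpace ℝ (Fin N)) 1) * volume (Ioc (0:ℝ) 1) :=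
                  setLIntegral_const _ _
              _ < ⊤ := by
                  refine ENNReal.mul_lt_top measure_ball_lt_top ?_
                  simp [Real.volume_Ioc]
          · have key : ∀ t ∈ Ioi (1:ℝ), ν {y | t ≤ ‖y‖ ^ a}
                ≤ ENNReal.ofReal (t ^ (a⁻¹ * N)) *
                  volume (Metric.closedBall (0 : EuclideanSpace ℝ (Fin N)) 1) := by
              intro t ht
              have ht0 : (0:ℝ) < t := lt_trans one_pos ht
              have hsub : {y : EuclideanSpace ℝ (Fin N) | t ≤ ‖y‖ ^ a}
                  ⊆ Metric.closedBall 0 (t ^ a⁻¹) := by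
                intro y hy
                simp only [mem_setOf_eq] at hy
                have hy0 : y ≠ 0 := by
                  rintro rfl
                  rw [norm_zero, Real.zero_rpow (ne_of_lt ha)] at hy
                  linarith
                have hyn : 0 < ‖y‖ := norm_pos_iff.2 hy0
                rw [Metric.mem_closedBall, dist_zero_right]
                exact (Real.le_rpow_inv_iff_of_neg hyn ht0 ha).2 hy
              calc ν {y | t ≤ ‖y‖ ^ a}
                  ≤ volume (Metric.closedBall (0 : EuclideanSpace ℝ (Fin N)) (t ^ a⁻¹)) :=
                    le_trans (Measure.restrict_le_self _) (measure_mono hsub)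
                _ = ENNReal.ofReal (t ^ (a⁻¹ * N)) *
                    volume (Metric.closedBall (0 : EuclideanSpace ℝ (Fin N)) 1) := by
                    rw [Measure.addHaar_closedBall' _ _ (Real.rpow_nonneg ht0.le _)]
                    congr 2
                    rw [finrank_euclideanSpace_fin, ← Real.rpow_natCast (t ^ a⁻¹) N,
                      ← Real.rpow_mul ht0.le]
            calc (∫⁻ t in Ioi 1, ν {y | t ≤ ‖y‖ ^ a})
                ≤ ∫⁻ t in Ioi 1, ENNReal.ofReal (t ^ (a⁻¹ * N)) *
                    volume (Metric.closedBall (0 : EuclideanSpace ℝ (Fin N)) 1) :=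
                  setLIntegral_mono' measurableSet_Ioi key
              _ = (∫⁻ t in Ioi 1, ENNReal.ofReal (t ^ (a⁻¹ * N))) *
                    volume (Metric.closedBall (0 : EuclideanSpace ℝ (Fin N)) 1) :=
                  lintegral_mul_const' _ _ measure_closedBall_lt_top.ne
              _ < ⊤ := by
                  refine ENNReal.mul_lt_top ?_ measure_closedBall_lt_top
                  have hs : a⁻¹ * (N:ℝ) < -1 := by
                    have : a⁻¹ * (N:ℝ) = (N:ℝ) / a := by rw [div_eq_mul_inv, mul_comm]
                    rw [this, div_lt_iff_of_neg ha]
                    linarith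
                  exact (integrableOn_Ioi_rpow_of_lt hs one_pos).setLIntegral_lt_top

/-- The fixed profile whose integral gives the constant. -/
lemma integrable_phi (hN : 5 ≤ N) :
    Integrable (fun y : EuclideanSpace ℝ (Fin N) =>
      ‖y‖ ^ ((2:ℝ) - N) * (1 + ‖y‖ ^ 2) ^ (((2:ℝ) - N) / 2)) volume := by
  have h5 : (5:ℝ) ≤ N := by exact_mod_cast hN
  have hmeas : Measurable fun y : EuclideanSpace ℝ (Fin N) =>
      ‖y‖ ^ ((2:ℝ) - N) * (1 + ‖y‖ ^ 2) ^ (((2:ℝ) - N) / 2) := by fun_prop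
  have hnn : ∀ y : EuclideanSpace ℝ (Fin N),
      0 ≤ ‖y‖ ^ ((2:ℝ) - N) * (1 + ‖y‖ ^ 2) ^ (((2:ℝ) - N) / 2) := fun y =>
    mul_nonneg (Real.rpow_nonneg (norm_nonneg y) _) (Real.rpow_nonneg (by positivity) _)
  rw [← integrableOn_univ, ← Set.union_compl_self (Metric.ball (0 : EuclideanSpace ℝ (Fin N)) 1)]
  refine IntegrableOn.union ?_ ?_
  · -- on the unit ball, dominate by ‖y‖^(2-N)
    refine Integrable.mono' (integrableOn_ball_rpow hN) hmeas.aestronglyMeasurable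
      (Filter.Eventually.of_forall fun y => ?_)
    rw [Real.norm_eq_abs, abs_of_nonneg (hnn y)]
    calc ‖y‖ ^ ((2:ℝ) - N) * (1 + ‖y‖ ^ 2) ^ (((2:ℝ) - N) / 2)
        ≤ ‖y‖ ^ ((2:ℝ) - N) * 1 := by
          refine mul_le_mul_of_nonneg_left ?_ (Real.rpow_nonneg (norm_nonneg y) _)
          exact Real.rpow_le_one_of_one_le_of_nonpos (by nlinarith [sq_nonneg ‖y‖])
            (by linarith)
      _ = ‖y‖ ^ ((2:ℝ) - N) := mul_one _
  · -- off the unit ball, dominate by a multiple of (1+‖y‖²)^(2-N)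
    have hr : (Module.finrank ℝ (EuclideanSpace ℝ (Fin N)) : ℝ) < 2 * (N:ℝ) - 4 := by
      rw [finrank_euclideanSpace_fin]
      linarith
    have hint : Integrable (fun y : EuclideanSpace ℝ (Fin N) =>
        (2:ℝ) ^ (((N:ℝ) - 2) / 2) * ((1 + ‖y‖ ^ 2) ^ (-(2 * (N:ℝ) - 4) / 2))) volume :=
      (integrable_rpow_neg_one_add_norm_sq hr).const_mul _
    refine Integrable.mono' hint.integrableOn hmeas.aestronglyMeasurable
      ((ae_restrict_iff' measurableSet_ball.compl).2 (Filter.Eventually.of_forall fun y hy => ?_))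
    rw [Real.norm_eq_abs, abs_of_nonneg (hnn y)]
    have hy1 : (1:ℝ) ≤ ‖y‖ := by
      simpa [Metric.mem_ball, dist_zero_right] using hy
    have hyp : (0:ℝ) < ‖y‖ := lt_of_lt_of_le one_pos hy1
    have hb : ‖y‖ ^ ((2:ℝ) - N) ≤ (2:ℝ) ^ (((N:ℝ) - 2) / 2) *
        (1 + ‖y‖ ^ 2) ^ (((2:ℝ) - N) / 2) := by
      have h1 : (1:ℝ) + ‖y‖ ^ 2 ≤ 2 * ‖y‖ ^ 2 := by nlinarith
      have h2 : ((2:ℝ) * ‖y‖ ^ 2) ^ (((2:ℝ) - N) / 2) ≤ (1 + ‖y‖ ^ 2) ^ (((2:ℝ) - N) / 2) :=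
        Real.rpow_le_rpow_of_nonpos (by positivity) h1 (by linarith)
      have h3 : ((2:ℝ) * ‖y‖ ^ 2) ^ (((2:ℝ) - N) / 2)
          = (2:ℝ) ^ (((2:ℝ) - N) / 2) * ‖y‖ ^ ((2:ℝ) - N) := by
        rw [Real.mul_rpow (by norm_num) (by positivity)]
        congr 1
        rw [← Real.rpow_natCast ‖y‖ 2, ← Real.rpow_mul (norm_nonneg y)]
        congr 1
        push_cast
        ring
      have h4 : (0:ℝ) < (2:ℝ) ^ (((2:ℝ) - N) / 2) := Real.rpow_pos_of_pos two_pos _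
      rw [h3] at h2
      have h5' : ‖y‖ ^ ((2:ℝ) - N)
          ≤ ((2:ℝ) ^ (((2:ℝ) - N) / 2))⁻¹ * (1 + ‖y‖ ^ 2) ^ (((2:ℝ) - N) / 2) := by
        have := mul_le_mul_of_nonneg_left h2 (inv_nonneg.2 h4.le)
        rwa [← mul_assoc, inv_mul_cancel₀ (ne_of_gt h4), one_mul] at this
      have h6 : ((2:ℝ) ^ (((2:ℝ) - N) / 2))⁻¹ = (2:ℝ) ^ (((N:ℝ) - 2) / 2) := by
        rw [← Real.rpow_neg (by norm_num : (0:ℝ) ≤ 2)]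
        congr 1
        ring
      rwa [h6] at h5'
    calc ‖y‖ ^ ((2:ℝ) - N) * (1 + ‖y‖ ^ 2) ^ (((2:ℝ) - N) / 2)
        ≤ ((2:ℝ) ^ (((N:ℝ) - 2) / 2) * (1 + ‖y‖ ^ 2) ^ (((2:ℝ) - N) / 2)) *
            (1 + ‖y‖ ^ 2) ^ (((2:ℝ) - N) / 2) :=
          mul_le_mul_of_nonneg_right hb (Real.rpow_nonneg (by positivity) _)
      _ = (2:ℝ) ^ (((N:ℝ) - 2) / 2) * ((1 + ‖y‖ ^ 2) ^ (-(2 * (N:ℝ) - 4) / 2)) := by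
          rw [mul_assoc, ← Real.rpow_add (by positivity : (0:ℝ) < 1 + ‖y‖ ^ 2)]
          congr 2
          ring

theorem LamW_product_estimate (N : ℕ) (hN : 5 ≤ N) :
    ∃ C > 0, ∀ lam mu : ℝ, 0 < lam → lam < mu →
      (∫ x : EuclideanSpace ℝ (Fin N), |LamWb N lam x * LamWb N mu x|)
        ≤ C * (lam / mu) ^ ((N : ℝ) / 2 - 2) := by
  classical
  have h5 : (5:ℝ) ≤ N := by exact_mod_cast hN
  set φ : EuclideanSpace ℝ (Fin N) → ℝ :=
    fun y => ‖y‖ ^ ((2:ℝ) - N) * (1 + ‖y‖ ^ 2) ^ (((2:ℝ) - N) / 2) with hφ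
  have hφint : Integrable φ volume := integrable_phi hN
  have hφnn : ∀ y, 0 ≤ φ y := fun y =>
    mul_nonneg (Real.rpow_nonneg (norm_nonneg y) _) (Real.rpow_nonneg (by positivity) _)
  set I : ℝ := ∫ y, φ y with hI
  have hI0 : 0 ≤ I := integral_nonneg hφnn
  have hA := Acst_pos hN
  refine ⟨Acst N ^ 2 * I + 1, by positivity, fun lam mu hlam hlm => ?_⟩
  have hmu : 0 < mu := lt_trans hlam hlm
  set K : ℝ := Acst N ^ 2 * lam ^ ((N:ℝ)/2 - 2) * mu ^ (-(N:ℝ)/2) with hK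
  have hKpos : 0 < K := by
    have := Real.rpow_pos_of_pos hlam ((N:ℝ)/2 - 2)
    have := Real.rpow_pos_of_pos hmu (-(N:ℝ)/2)
    positivity
  set G : EuclideanSpace ℝ (Fin N) → ℝ :=
    fun x => K * (mu ^ ((2:ℝ) - N) * φ (mu⁻¹ • x)) with hG
  -- integrability of the majorant
  have hGint : Integrable G volume :=
    ((hφint.comp_smul (inv_ne_zero hmu.ne')).const_mul _).const_mul K
  -- the pointwise bound
  have hptwise : ∀ x : EuclideanSpace ℝ (Fin N), x ≠ 0 →
      |LamWb N lam x * LamWb N mu x| ≤ G x := by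
    intro x hx
    have hxl : lam⁻¹ • x ≠ 0 := smul_ne_zero (inv_ne_zero hlam.ne') hx
    have hlr : 0 < lam ^ (-(N:ℝ)/2) := Real.rpow_pos_of_pos hlam _
    have hmr : 0 < mu ^ (-(N:ℝ)/2) := Real.rpow_pos_of_pos hmu _
    have e1 : |LamWb N lam x| ≤ lam ^ (-(N:ℝ)/2) * (Acst N * ‖lam⁻¹ • x‖ ^ ((2:ℝ) - N)) := by
      rw [LamWb, abs_mul, abs_of_pos hlr]
      exact mul_le_mul_of_nonneg_left (LamW_bound2 hN hxl) hlr.le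
    have e2 : |LamWb N mu x| ≤ mu ^ (-(N:ℝ)/2) *
        (Acst N * (1 + ‖mu⁻¹ • x‖ ^ 2) ^ (((2:ℝ) - N) / 2)) := by
      rw [LamWb, abs_mul, abs_of_pos hmr]
      exact mul_le_mul_of_nonneg_left (LamW_bound1 hN _) hmr.le
    have e3 : ‖lam⁻¹ • x‖ ^ ((2:ℝ) - N) = lam ^ ((N:ℝ) - 2) * ‖x‖ ^ ((2:ℝ) - N) := by
      rw [norm_smul, Real.norm_eq_abs, abs_of_pos (inv_pos.2 hlam),
        Real.mul_rpow (inv_nonneg.2 hlam.le) (norm_nonneg x),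
        ← Real.rpow_neg_one lam, ← Real.rpow_mul hlam.le]
      congr 2
      ring
    have e4 : lam ^ (-(N:ℝ)/2) * lam ^ ((N:ℝ) - 2) = lam ^ ((N:ℝ)/2 - 2) := by
      rw [← Real.rpow_add hlam]
      congr 1
      ring
    have hprod : |LamWb N lam x * LamWb N mu x| ≤
        (lam ^ (-(N:ℝ)/2) * (Acst N * ‖lam⁻¹ • x‖ ^ ((2:ℝ) - N))) *
        (mu ^ (-(N:ℝ)/2) * (Acst N * (1 + ‖mu⁻¹ • x‖ ^ 2) ^ (((2:ℝ) - N) / 2))) := by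
      rw [abs_mul]
      exact mul_le_mul e1 e2 (abs_nonneg _) (by positivity)
    refine hprod.trans (le_of_eq ?_)
    have e5 : φ (mu⁻¹ • x) = mu ^ ((N:ℝ) - 2) * ‖x‖ ^ ((2:ℝ) - N) *
        (1 + ‖mu⁻¹ • x‖ ^ 2) ^ (((2:ℝ) - N) / 2) := by
      rw [hφ]
      simp only
      congr 1
      rw [norm_smul, Real.norm_eq_abs, abs_of_pos (inv_pos.2 hmu),
        Real.mul_rpow (inv_nonneg.2 hmu.le) (norm_nonneg x),
        ← Real.rpow_neg_one mu, ← Real.rpow_mul hmu.le]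
      congr 2
      ring
    simp only [hG, hK]
    rw [e5, e3]
    have e6 : mu ^ ((2:ℝ) - N) * mu ^ ((N:ℝ) - 2) = 1 := by
      rw [← Real.rpow_add hmu]
      norm_num
    linear_combination (Acst N ^ 2 * mu ^ (-(N:ℝ)/2) * ‖x‖ ^ ((2:ℝ) - N) *
        (1 + ‖mu⁻¹ • x‖ ^ 2) ^ (((2:ℝ) - N)/2)) * e4 -
      (Acst N ^ 2 * lam ^ ((N:ℝ)/2 - 2) * mu ^ (-(N:ℝ)/2) * ‖x‖ ^ ((2:ℝ) - N) *
        (1 + ‖mu⁻¹ • x‖ ^ 2) ^ (((2:ℝ) - N)/2)) * e6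
  -- the a.e. bound
  have hae : ∀ᵐ x : EuclideanSpace ℝ (Fin N) ∂volume,
      |LamWb N lam x * LamWb N mu x| ≤ G x := by
    have hz : volume ({(0 : EuclideanSpace ℝ (Fin N))} : Set (EuclideanSpace ℝ (Fin N))) = 0 := by
      have hne : Nonempty (Fin N) := ⟨⟨0, by omega⟩⟩
      have : Nontrivial (EuclideanSpace ℝ (Fin N)) := by
        unfold EuclideanSpace PiLp
        infer_instance
      exact measure_singleton 0
    refine ae_iff.2 (measure_mono_null (fun x hx => ?_) hz)
    simp only [Set.mem_setOf_eq, not_le] at hx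
    rw [Set.mem_singleton_iff]
    by_contra h0
    exact absurd (hptwise x h0) (not_le.2 hx)
  have hmono := integral_mono_of_nonneg
    (Filter.Eventually.of_forall fun x => abs_nonneg (LamWb N lam x * LamWb N mu x)) hGint hae
  -- computing the integral of the majorant
  have hGeq : (∫ x, G x) = Acst N ^ 2 * I * (lam / mu) ^ ((N:ℝ)/2 - 2) := by
    have hsmul : (∫ x, φ (mu⁻¹ • x)) = mu ^ ((N:ℝ)) * I := by
      rw [MeasureTheory.Measure.integral_comp_inv_smul_of_nonneg volume φ hmu.le,
        finrank_euclideanSpace_fin, smul_eq_mul, ← Real.rpow_natCast mu N]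
    have : (∫ x, G x) = K * (mu ^ ((2:ℝ) - N) * (mu ^ ((N:ℝ)) * I)) := by
      rw [hG]
      rw [MeasureTheory.integral_const_mul K, MeasureTheory.integral_const_mul, hsmul]
    rw [this, hK]
    have m1 : mu ^ (-(N:ℝ)/2) * (mu ^ ((2:ℝ) - N) * mu ^ ((N:ℝ))) = mu ^ (-((N:ℝ)/2 - 2)) := by
      rw [← Real.rpow_add hmu, ← Real.rpow_add hmu]
      congr 1
      ring
    have m2 : (lam / mu) ^ ((N:ℝ)/2 - 2) = lam ^ ((N:ℝ)/2 - 2) * mu ^ (-((N:ℝ)/2 - 2)) := by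
      rw [Real.div_rpow hlam.le hmu.le, Real.rpow_neg hmu.le, div_eq_mul_inv]
    rw [m2]
    linear_combination (Acst N ^ 2 * lam ^ ((N:ℝ)/2 - 2) * I) * m1
  have hfin : 0 < (lam / mu) ^ ((N:ℝ)/2 - 2) :=
    Real.rpow_pos_of_pos (div_pos hlam hmu) _
  calc (∫ x : EuclideanSpace ℝ (Fin N), |LamWb N lam x * LamWb N mu x|)
      ≤ ∫ x, G x := hmono
    _ = Acst N ^ 2 * I * (lam / mu) ^ ((N:ℝ)/2 - 2) := hGeq
    _ ≤ (Acst N ^ 2 * I + 1) * (lam / mu) ^ ((N:ℝ)/2 - 2) := by nlinarith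
end
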